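/- arXiv:0803.0800 — 4 statements merged into one kernel-verified Lean document; each statement's English description precedes it below -/
import Mathlib

section
/- Under conditions (1.2) and (1.5), let ρ(x) = u(x)v(x) and let x₀ be the unique solution of u(x) = v(x) in ℝ. Then the Davies–Harrell representations hold: u(x) = √(ρ(x)) · exp(−(1/2)∫_{x₀}^x dt/(r(t)ρ(t))) and v(x) = √(ρ(x)) · exp((1/2)∫_{x₀}^x dt/(r(t)ρ(t))) for all x ∈ ℝ, and consequently the Green function satisfies G(x,t) = √(ρ(x)ρ(t)) · exp(−(1/2)|∫_t^x dξ/(r(ξ)ρ(ξ))|) for all x, t ∈ ℝ. -/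
open MeasureTheory Set Filter
open scoped ENNReal

noncomputable section

/-- Conditions (1.2): `r > 0`, `q ≥ 0`, `1/r ∈ L¹loc(ℝ)`, `q ∈ L¹loc(ℝ)`. -/
def Cond12 (r q : ℝ → ℝ) : Prop :=
  (∀ x : ℝ, 0 < r x) ∧ (∀ x : ℝ, 0 ≤ q x) ∧
    LocallyIntegrable (fun x : ℝ => (r x)⁻¹) volume ∧ LocallyIntegrable q volume

/-- Condition (1.4): `∫_{-∞}^0 dt/r(t) = ∫_0^∞ dt/r(t) = ∞`. -/
def Cond14 (r : ℝ → ℝ) : Prop :=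
  (∫⁻ t in Iic (0 : ℝ), ENNReal.ofReal (r t)⁻¹) = ⊤ ∧
  (∫⁻ t in Ici (0 : ℝ), ENNReal.ofReal (r t)⁻¹) = ⊤

/-- Condition (1.5): `∫_{-∞}^x q > 0` and `∫_x^∞ q > 0` for all `x`. -/
def Cond15 (q : ℝ → ℝ) : Prop :=
  ∀ x : ℝ, (0 < ∫⁻ t in Iic x, ENNReal.ofReal (q t)) ∧
           (0 < ∫⁻ t in Ici x, ENNReal.ofReal (q t))

/-- Condition (1.6): `(∫_{x-d}^x 1/r)·(∫_{x-d}^x q) → ∞` as `|d| → ∞` (for `d < 0` the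
integrals are taken over `[x, x-d]`; the set `uIoc (x-d) x` covers both orientations). -/
def Cond16 (r q : ℝ → ℝ) : Prop :=
  ∀ x : ℝ, Tendsto (fun d : ℝ =>
      (∫ t in uIoc (x - d) x, (r t)⁻¹) * ∫ t in uIoc (x - d) x, q t)
    (atTop ⊔ atBot) atTop

/-- `y` is a solution of `-(r y')' + q y = f` with (a.e.) derivative `y'`:
`y` and `r·y'` are (locally) absolutely continuous, expressed via the integral
characterization, and the equation holds. -/
def IsSolutionWith (r q f y y' : ℝ → ℝ) : Prop :=
  (∀ a b : ℝ, IntervalIntegrable y' volume a b) ∧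
  (∀ x : ℝ, y x = y 0 + ∫ t in (0:ℝ)..x, y' t) ∧
  (∀ a b : ℝ, IntervalIntegrable (fun t => q t * y t - f t) volume a b) ∧
  (∀ x : ℝ, r x * y' x = r 0 * y' 0 + ∫ t in (0:ℝ)..x, (q t * y t - f t))

/-- `y` is a solution of `-(r y')' + q y = f`. -/
def IsSolution (r q f y : ℝ → ℝ) : Prop := ∃ y' : ℝ → ℝ, IsSolutionWith r q f y y'

/-- `z` is a solution of the homogeneous equation `(r z')' = q z` with derivative `z'`. -/
def IsSolutionHom (r q z z' : ℝ → ℝ) : Prop := IsSolutionWith r q (fun _ => 0) z z'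

/-- Membership in `L_p(ℝ)`. -/
def MemLP (f : ℝ → ℝ) (p : ℝ) : Prop := MemLp f (ENNReal.ofReal p) volume

/-- The `L_p(ℝ)` norm. -/
def lpNorm (f : ℝ → ℝ) (p : ℝ) : ℝ≥0∞ := eLpNorm f (ENNReal.ofReal p) volume

/-- The equation `-(r y')' + q y = f` is correctly solvable in `L_p(ℝ)`: for every
`f ∈ L_p` there is a unique solution `y ∈ L_p`, and `‖y‖_p ≤ c(p)‖f‖_p` with an
absolute constant `c(p) > 0`. -/
def CorrectlySolvable (r q : ℝ → ℝ) (p : ℝ) : Prop :=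
  (∀ f : ℝ → ℝ, MemLP f p → ∃! y : ℝ → ℝ, IsSolution r q f y ∧ MemLP y p) ∧
  ∃ c : ℝ, 0 < c ∧ ∀ f y : ℝ → ℝ, MemLP f p → IsSolution r q f y → MemLP y p →
    lpNorm y p ≤ ENNReal.ofReal c * lpNorm f p

/-- `{u, v}` (with derivatives `u'`, `v'`) is the fundamental system of solutions of
`(r z')' = q z` with properties (1.8)-(1.11). -/
def IsFSS (r q u u' v v' : ℝ → ℝ) : Prop :=
  IsSolutionHom r q u u' ∧ IsSolutionHom r q v v' ∧
  (∀ x : ℝ, 0 < u x) ∧ (∀ x : ℝ, 0 < v x) ∧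
  (∀ x : ℝ, 0 ≤ v' x) ∧ (∀ x : ℝ, u' x ≤ 0) ∧
  (∀ x : ℝ, r x * (v' x * u x - u' x * v x) = 1) ∧
  Tendsto (fun x => v x / u x) atBot (nhds 0) ∧
  Tendsto (fun x => u x / v x) atTop (nhds 0) ∧
  (∫⁻ t in Iic (0 : ℝ), ENNReal.ofReal (r t * (v t) ^ 2)⁻¹) = ⊤ ∧
  (∫⁻ t in Ici (0 : ℝ), ENNReal.ofReal (r t * (u t) ^ 2)⁻¹) = ⊤ ∧
  (∫⁻ t in Ici (0 : ℝ), ENNReal.ofReal (r t * (v t) ^ 2)⁻¹) < ⊤ ∧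
  (∫⁻ t in Iic (0 : ℝ), ENNReal.ofReal (r t * (u t) ^ 2)⁻¹) < ⊤

/-- The Green function `G(x,t)` of (1.12). -/
def greenK (u v : ℝ → ℝ) (x t : ℝ) : ℝ := if t ≤ x then u x * v t else u t * v x

/-- `(G₁ f)(x) = u(x) ∫_{-∞}^x v f`. -/
def G1op (u v f : ℝ → ℝ) (x : ℝ) : ℝ := u x * ∫ t in Iic x, v t * f t

/-- `(G₂ f)(x) = v(x) ∫_x^∞ u f`. -/
def G2op (u v f : ℝ → ℝ) (x : ℝ) : ℝ := v x * ∫ t in Ici x, u t * f t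

/-- The Green integral operator `(G f)(x) = ∫_ℝ G(x,t) f(t) dt`. -/
def greenOp (u v f : ℝ → ℝ) (x : ℝ) : ℝ := G1op u v f x + G2op u v f x

/-- The operator norm of a map `T` acting on `L_p(ℝ)`: the least constant `C` such
that `‖T f‖_p ≤ C ‖f‖_p` for all `f ∈ L_p`. -/
def opNormLp (T : (ℝ → ℝ) → ℝ → ℝ) (p : ℝ) : ℝ≥0∞ :=
  sInf {C : ℝ≥0∞ | ∀ f : ℝ → ℝ, MemLP f p → lpNorm (T f) p ≤ C * lpNorm f p}

/-- The Green operator is bounded as an operator from `L_p(ℝ)` to `L_p(ℝ)`: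
it is well defined on `L_p` (the defining integrals converge), maps into `L_p`,
and its operator norm is finite. -/
def GreenBounded (u v : ℝ → ℝ) (p : ℝ) : Prop :=
  (∀ f : ℝ → ℝ, MemLP f p →
    (∀ x : ℝ, IntegrableOn (fun t => v t * f t) (Iic x) volume ∧
              IntegrableOn (fun t => u t * f t) (Ici x) volume) ∧
    MemLP (greenOp u v f) p) ∧
  opNormLp (greenOp u v) p < ⊤

/-- `F₁(x,d) = (∫_{x-d}^x dt/r)·(∫_{x-d}^x q dt)`. -/
def F1 (r q : ℝ → ℝ) (x d : ℝ) : ℝ :=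
  (∫ t in (x - d)..x, (r t)⁻¹) * ∫ t in (x - d)..x, q t

/-- `F₂(x,d) = (∫_x^{x+d} dt/r)·(∫_x^{x+d} q dt)`. -/
def F2 (r q : ℝ → ℝ) (x d : ℝ) : ℝ :=
  (∫ t in x..(x + d), (r t)⁻¹) * ∫ t in x..(x + d), q t

/-- `φ(x) = ∫_{x-d₁(x)}^x dt/r(t)`. -/
def phiF (r d1 : ℝ → ℝ) (x : ℝ) : ℝ := ∫ t in (x - d1 x)..x, (r t)⁻¹

/-- `ψ(x) = ∫_x^{x+d₂(x)} dt/r(t)`. -/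
def psiF (r d2 : ℝ → ℝ) (x : ℝ) : ℝ := ∫ t in x..(x + d2 x), (r t)⁻¹

/-- `h(x) = φ(x)ψ(x)/(φ(x)+ψ(x))`. -/
def hF (r d1 d2 : ℝ → ℝ) (x : ℝ) : ℝ :=
  phiF r d1 x * psiF r d2 x / (phiF r d1 x + psiF r d2 x)

/-- `d₁` solves the first equation of (1.15). -/
def IsD1 (r q d1 : ℝ → ℝ) : Prop := ∀ x : ℝ, 0 < d1 x ∧ F1 r q x (d1 x) = 1

/-- `d₂` solves the second equation of (1.15). -/
def IsD2 (r q d2 : ℝ → ℝ) : Prop := ∀ x : ℝ, 0 < d2 x ∧ F2 r q x (d2 x) = 1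

/-- `d` solves equation (1.18): `∫_{x-d(x)}^{x+d(x)} dt/(r(t)h(t)) = 1`. -/
def IsD (r h d : ℝ → ℝ) : Prop :=
  ∀ x : ℝ, 0 < d x ∧ (∫ t in (x - d x)..(x + d x), (r t * h t)⁻¹) = 1

/-- The Hardy-type operator `(𝒦 f)(t) = μ(t) ∫_t^∞ θ(ξ) f(ξ) dξ`. -/
def hardyOp (μ θ f : ℝ → ℝ) (t : ℝ) : ℝ := μ t * ∫ ξ in Ici t, θ ξ * f ξ

/-- `H_p = sup_x (∫_{-∞}^x μ^p)^{1/p} (∫_x^∞ θ^{p'})^{1/p'}` with `p' = p/(p-1)`. -/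
def HardyHp (μ θ : ℝ → ℝ) (p : ℝ) : ℝ≥0∞ :=
  ⨆ x : ℝ, (∫⁻ t in Iic x, ENNReal.ofReal (μ t ^ p)) ^ (1 / p) *
           (∫⁻ t in Ici x, ENNReal.ofReal (θ t ^ (p / (p - 1)))) ^ (1 - 1 / p)


namespace Stmt9Aux

lemma contOfPrim {f F : ℝ → ℝ} (hf : ∀ a b : ℝ, IntervalIntegrable f volume a b)
    (hF : ∀ x : ℝ, F x = F 0 + ∫ t in (0:ℝ)..x, f t) : Continuous F := by
  have : F = fun x => F 0 + ∫ t in (0:ℝ)..x, f t := funext hF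
  rw [this]
  exact continuous_const.add (intervalIntegral.continuous_primitive hf 0)

lemma primShift {f F : ℝ → ℝ} (hf : ∀ a b : ℝ, IntervalIntegrable f volume a b)
    (hF : ∀ x : ℝ, F x = F 0 + ∫ t in (0:ℝ)..x, f t) (a b : ℝ) :
    F b = F a + ∫ t in a..b, f t := by
  rw [hF a, hF b, add_assoc, intervalIntegral.integral_add_adjacent_intervals (hf 0 a) (hf a b)]

lemma mulc {f c : ℝ → ℝ} (hf : ∀ a b : ℝ, IntervalIntegrable f volume a b)
    (hc : Continuous c) (a b : ℝ) :
    IntervalIntegrable (fun t => c t * f t) volume a b :=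
  (hf a b).continuousOn_mul hc.continuousOn

/-- Chain rule for primitives of locally integrable functions. -/
lemma chain {f F Φ Φ' : ℝ → ℝ}
    (hf : ∀ a b : ℝ, IntervalIntegrable f volume a b)
    (hF : ∀ x : ℝ, F x = F 0 + ∫ t in (0:ℝ)..x, f t)
    (hΦ : ∀ x : ℝ, HasDerivAt Φ (Φ' x) x) (hΦ' : Continuous Φ')
    (a b : ℝ) :
    Φ (F b) - Φ (F a) = ∫ t in a..b, Φ' (F t) * f t := by
  have hFc : Continuous F := contOfPrim hf hF
  have hΦc : Continuous Φ := by
    rw [continuous_iff_continuousAt]; exact fun x => (hΦ x).continuousAt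
  -- reduce to a ≤ b
  have key : ∀ a b : ℝ, a ≤ b → Φ (F b) - Φ (F a) = ∫ t in a..b, Φ' (F t) * f t := by
    intro a b hab
    -- bound on F over [a,b]
    obtain ⟨R, hR⟩ := isCompact_Icc.exists_bound_of_continuousOn (s := Icc a b)
      hFc.continuousOn
    have hR0 : 0 ≤ R := le_trans (norm_nonneg (F a)) (hR a ⟨le_rfl, hab⟩)
    set B : ℝ := R + 1 with hB
    obtain ⟨C, hC⟩ := isCompact_Icc.exists_bound_of_continuousOn (s := Icc (-B) B)
      hΦ'.continuousOn
    have hC0 : 0 ≤ C := le_trans (norm_nonneg _) (hC 0 ⟨by simp [hB]; linarith, by simp [hB]; linarith⟩)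
    -- f restricted to [a,b]
    set f₁ : ℝ → ℝ := (Icc a b).indicator f with hf₁
    have hfIcc : IntegrableOn f (Icc a b) volume := by
      rw [← intervalIntegrable_iff_integrableOn_Icc_of_le hab]; exact hf a b
    have hf₁int : Integrable f₁ volume := hfIcc.integrable_indicator measurableSet_Icc
    -- approximating sequence
    have happrox : ∀ n : ℕ, ∃ g : ℝ → ℝ, Continuous g ∧ Integrable g volume ∧
        (∫ x, ‖f₁ x - g x‖) ≤ 1 / (n + 1) := by
      intro n
      obtain ⟨g, -, hint, hcont, hgint⟩ :=
        hf₁int.exists_hasCompactSupport_integral_sub_le (ε := 1 / (n + 1)) (by positivity)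
      exact ⟨g, hcont, hgint, hint⟩
    choose g hgc hgint hgapp using happrox
    set G : ℕ → ℝ → ℝ := fun n x => F a + ∫ t in a..x, g n t with hG
    set d : ℕ → ℝ := fun n => ∫ t in a..b, |f t - g n t| with hd
    have hdle : ∀ n, d n ≤ 1 / (n + 1) := by
      intro n
      have h1 : d n = ∫ t in Ioc a b, |f t - g n t| := intervalIntegral.integral_of_le hab
      have h2 : ∀ t ∈ Ioc a b, |f t - g n t| = ‖f₁ t - g n t‖ := by
        intro t ht
        rw [hf₁, indicator_of_mem (Ioc_subset_Icc_self ht), Real.norm_eq_abs]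
      rw [h1, setIntegral_congr_fun measurableSet_Ioc h2]
      calc (∫ t in Ioc a b, ‖f₁ t - g n t‖) ≤ ∫ t, ‖f₁ t - g n t‖ :=
            setIntegral_le_integral ((hf₁int.sub (hgint n)).norm)
              (Eventually.of_forall fun t => norm_nonneg _)
        _ ≤ 1 / (n + 1) := hgapp n
    have hd0 : Tendsto d atTop (nhds 0) := by
      apply squeeze_zero (fun n => intervalIntegral.integral_nonneg hab fun t _ => abs_nonneg _)
        hdle
      exact tendsto_one_div_add_atTop_nhds_zero_nat
    have hGF : ∀ n, ∀ t ∈ Icc a b, |G n t - F t| ≤ d n := by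
      intro n t ht
      have hFt : F t = F a + ∫ s in a..t, f s := primShift hf hF a t
      have : G n t - F t = ∫ s in a..t, (g n s - f s) := by
        rw [hG, hFt]
        simp only [add_sub_add_left_eq_sub]
        rw [intervalIntegral.integral_sub ((hgc n).intervalIntegrable a t) (hf a t)]
      rw [this]
      calc |∫ s in a..t, (g n s - f s)| ≤ ∫ s in a..t, |g n s - f s| :=
            intervalIntegral.abs_integral_le_integral_abs ht.1
        _ ≤ ∫ s in a..b, |g n s - f s| := by
            apply intervalIntegral.integral_mono_interval le_rfl ht.1 ht.2
              (Eventually.of_forall fun s => abs_nonneg _)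
              (((hgc n).intervalIntegrable a b).sub (hf a b)).abs
        _ = d n := by
            rw [hd]
            apply intervalIntegral.integral_congr
            intro s _
            exact (abs_sub_comm _ _)
    have hGbd : ∀ n, ∀ t ∈ Icc a b, |G n t| ≤ B := by
      intro n t ht
      have h1 := hGF n t ht
      have h2 : |F t| ≤ R := hR t ht
      have h3 : d n ≤ 1 := (hdle n).trans (by
        rw [div_le_one (by positivity)]; push_cast; linarith)
      calc |G n t| ≤ |G n t - F t| + |F t| := by
            have := abs_sub_abs_le_abs_sub (G n t) (F t); linarith [abs_sub_comm (G n t) (F t)]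
        _ ≤ B := by rw [hB]; linarith
    have hGcont : ∀ n, Continuous (G n) := fun n =>
      continuous_const.add (intervalIntegral.continuous_primitive
        (fun a' b' => (hgc n).intervalIntegrable a' b') a)
    -- FTC for each n
    have hftc : ∀ n, Φ (G n b) - Φ (F a) = ∫ t in a..b, Φ' (G n t) * g n t := by
      intro n
      have hderiv : ∀ x : ℝ, HasDerivAt (G n) (g n x) x := by
        intro x
        have := intervalIntegral.integral_hasDerivAt_right
          ((hgc n).intervalIntegrable a x)
          ((hgc n).stronglyMeasurableAtFilter volume (nhds x)) (hgc n).continuousAt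
        simpa [hG] using (this.const_add (F a))
      have hcomp : ∀ x : ℝ, HasDerivAt (fun y => Φ (G n y)) (Φ' (G n x) * g n x) x := by
        intro x
        exact (hΦ (G n x)).comp x (hderiv x)
      have hint : IntervalIntegrable (fun t => Φ' (G n t) * g n t) volume a b :=
        ((hΦ'.comp (hGcont n)).mul (hgc n)).intervalIntegrable a b
      have := intervalIntegral.integral_eq_sub_of_hasDerivAt (fun x _ => hcomp x) hint
      rw [this]
      congr 1
      rw [hG]; simp
    -- pointwise bound on |Φ' (G n t)|
    have hΦbd : ∀ n, ∀ t ∈ Icc a b, |Φ' (G n t)| ≤ C := by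
      intro n t ht
      exact hC (G n t) (abs_le.mp (hGbd n t ht))
    -- convergence of G n t to F t
    have hGt : ∀ t ∈ Icc a b, Tendsto (fun n => G n t) atTop (nhds (F t)) := by
      intro t ht
      rw [tendsto_iff_dist_tendsto_zero]
      apply squeeze_zero (fun n => dist_nonneg) (fun n => ?_) hd0
      rw [Real.dist_eq]; exact hGF n t ht
    -- limit of the left-hand sides
    have hLHS : Tendsto (fun n => Φ (G n b) - Φ (F a)) atTop
        (nhds (Φ (F b) - Φ (F a))) :=
      ((hΦc.tendsto (F b)).comp (hGt b ⟨hab, le_rfl⟩)).sub tendsto_const_nhds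
    -- split the right-hand side
    have hmem : ∀ t, t ∈ uIoc a b → t ∈ Icc a b := by
      intro t ht
      rw [uIoc_of_le hab] at ht
      exact Ioc_subset_Icc_self ht
    have int2 : ∀ n, IntervalIntegrable (fun t => Φ' (G n t) * f t) volume a b :=
      fun n => (hf a b).continuousOn_mul (hΦ'.comp (hGcont n)).continuousOn
    have int1 : ∀ n, IntervalIntegrable (fun t => Φ' (G n t) * (g n t - f t)) volume a b :=
      fun n => (((hgc n).intervalIntegrable a b).sub (hf a b)).continuousOn_mul
        (hΦ'.comp (hGcont n)).continuousOn
    have hsplit : ∀ n, (∫ t in a..b, Φ' (G n t) * g n t) =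
        (∫ t in a..b, Φ' (G n t) * (g n t - f t)) + ∫ t in a..b, Φ' (G n t) * f t := by
      intro n
      rw [← intervalIntegral.integral_add (int1 n) (int2 n)]
      apply intervalIntegral.integral_congr
      intro t _
      ring
    -- first term tends to zero
    have hT1 : Tendsto (fun n => ∫ t in a..b, Φ' (G n t) * (g n t - f t)) atTop (nhds 0) := by
      have hCd : Tendsto (fun n => C * d n) atTop (nhds 0) := by
        simpa using hd0.const_mul C
      refine squeeze_zero_norm (fun n => ?_) hCd
      have hb1 : ∀ᵐ t ∂(volume.restrict (uIoc a b)),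
          ‖Φ' (G n t) * (g n t - f t)‖ ≤ C * |f t - g n t| := by
        refine (ae_restrict_iff' measurableSet_uIoc).mpr (Eventually.of_forall fun t ht => ?_)
        rw [Real.norm_eq_abs, abs_mul, abs_sub_comm (g n t)]
        exact mul_le_mul_of_nonneg_right (hΦbd n t (hmem t ht)) (abs_nonneg _)
      have hb2 : IntervalIntegrable (fun t => C * |f t - g n t|) volume a b :=
        (((hf a b).sub ((hgc n).intervalIntegrable a b)).abs).const_mul C
      calc ‖∫ t in a..b, Φ' (G n t) * (g n t - f t)‖
          ≤ |(∫ t in a..b, C * |f t - g n t|)| :=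
            (intervalIntegral.norm_integral_le_of_norm_le hab
              ((ae_restrict_iff' measurableSet_Ioc).mp (by rwa [uIoc_of_le hab] at hb1)) hb2).trans
              (le_abs_self _)
        _ = C * d n := by
            rw [intervalIntegral.integral_const_mul, abs_of_nonneg (mul_nonneg hC0
              (intervalIntegral.integral_nonneg hab fun t _ => abs_nonneg _))]
    -- second term converges by dominated convergence
    have hT2 : Tendsto (fun n => ∫ t in a..b, Φ' (G n t) * f t) atTop
        (nhds (∫ t in a..b, Φ' (F t) * f t)) := by
      apply intervalIntegral.tendsto_integral_filter_of_dominated_convergence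
        (fun t => C * |f t|)
      · exact Eventually.of_forall fun n =>
          ((hΦ'.comp (hGcont n)).aestronglyMeasurable.restrict).mul
            (hf a b).def'.aestronglyMeasurable
      · refine Eventually.of_forall fun n => ae_of_all _ fun t ht => ?_
        rw [Real.norm_eq_abs, abs_mul]
        exact mul_le_mul_of_nonneg_right (hΦbd n t (hmem t ht)) (abs_nonneg _)
      · exact ((hf a b).abs).const_mul C
      · refine ae_of_all _ fun t ht => ?_
        exact ((hΦ'.tendsto (F t)).comp (hGt t (hmem t ht))).mul_const (f t)
    have hRHS : Tendsto (fun n => Φ (G n b) - Φ (F a)) atTop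
        (nhds (∫ t in a..b, Φ' (F t) * f t)) := by
      have h := hT1.add hT2
      rw [zero_add] at h
      apply h.congr fun n => ?_
      rw [← hsplit n, ← hftc n]
    exact tendsto_nhds_unique hLHS hRHS
  rcases le_total a b with hab | hba
  · exact key a b hab
  · have := key b a hba
    rw [intervalIntegral.integral_symm]
    linarith

/-- Integration by parts for primitives. -/
lemma parts {f g F G : ℝ → ℝ}
    (hf : ∀ a b : ℝ, IntervalIntegrable f volume a b)
    (hg : ∀ a b : ℝ, IntervalIntegrable g volume a b)
    (hF : ∀ x : ℝ, F x = F 0 + ∫ t in (0:ℝ)..x, f t)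
    (hG : ∀ x : ℝ, G x = G 0 + ∫ t in (0:ℝ)..x, g t) (a b : ℝ) :
    F b * G b - F a * G a = ∫ t in a..b, (F t * g t + f t * G t) := by
  have hΦ : ∀ x : ℝ, HasDerivAt (fun y : ℝ => y ^ 2) (2 * x) x := by
    intro x; simpa using hasDerivAt_pow 2 x
  have hΦ' : Continuous (fun x : ℝ => 2 * x) := continuous_const.mul continuous_id
  have hfg : ∀ a b : ℝ, IntervalIntegrable (fun t => f t + g t) volume a b :=
    fun a b => (hf a b).add (hg a b)
  have hFG : ∀ x : ℝ, F x + G x = (F 0 + G 0) + ∫ t in (0:ℝ)..x, (f t + g t) := by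
    intro x
    rw [intervalIntegral.integral_add (hf 0 x) (hg 0 x), hF x, hG x]; ring
  have hFc : Continuous F := contOfPrim hf hF
  have hGc : Continuous G := contOfPrim hg hG
  have e1 : F b ^ 2 - F a ^ 2 = ∫ t in a..b, 2 * F t * f t := by
    simpa using chain hf hF hΦ hΦ' a b
  have e2 : G b ^ 2 - G a ^ 2 = ∫ t in a..b, 2 * G t * g t := by
    simpa using chain hg hG hΦ hΦ' a b
  have e3 : (F b + G b) ^ 2 - (F a + G a) ^ 2
      = ∫ t in a..b, 2 * (F t + G t) * (f t + g t) := by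
    simpa using chain hfg (F := fun x => F x + G x) (fun x => hFG x) hΦ hΦ' a b
  have hi1 : IntervalIntegrable (fun t => 2 * F t * f t) volume a b :=
    mulc (c := fun t => 2 * F t) hf (continuous_const.mul hFc) a b
  have hi2 : IntervalIntegrable (fun t => 2 * G t * g t) volume a b :=
    mulc (c := fun t => 2 * G t) hg (continuous_const.mul hGc) a b
  have hi3 : IntervalIntegrable (fun t => 2 * (F t + G t) * (f t + g t)) volume a b :=
    mulc (c := fun t => 2 * (F t + G t)) hfg (continuous_const.mul (hFc.add hGc)) a b
  have key : (2:ℝ) * (F b * G b - F a * G a)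
      = ∫ t in a..b, 2 * (F t * g t + f t * G t) := by
    calc (2:ℝ) * (F b * G b - F a * G a)
        = ((F b + G b) ^ 2 - (F a + G a) ^ 2) - (F b ^ 2 - F a ^ 2)
            - (G b ^ 2 - G a ^ 2) := by ring
      _ = (∫ t in a..b, 2 * (F t + G t) * (f t + g t))
            - (∫ t in a..b, 2 * F t * f t) - ∫ t in a..b, 2 * G t * g t := by
          rw [e1, e2, e3]
      _ = ∫ t in a..b, (2 * (F t + G t) * (f t + g t) - 2 * F t * f t
            - 2 * G t * g t) := by
          rw [← intervalIntegral.integral_sub hi3 hi1,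
            ← intervalIntegral.integral_sub (hi3.sub hi1) hi2]
      _ = ∫ t in a..b, 2 * (F t * g t + f t * G t) :=
          intervalIntegral.integral_congr fun t _ => by ring
  rw [intervalIntegral.integral_const_mul] at key
  linarith

/-- Gronwall-type uniqueness, one-sided. -/
lemma gronwall_right {k D : ℝ → ℝ} (hk : ∀ a b : ℝ, IntervalIntegrable k volume a b)
    (hD : Continuous D) (x₀ : ℝ)
    (hEq : ∀ x : ℝ, D x = ∫ t in x₀..x, k t * D t) :
    ∀ x : ℝ, x₀ ≤ x → D x = 0 := by
  intro x hx
  have habs : ∀ a b : ℝ, IntervalIntegrable (fun t => |k t|) volume a b :=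
    fun a b => (hk a b).abs
  set K : ℝ → ℝ := fun s => ∫ t in x₀..s, |k t| with hKdef
  have hKprim : ∀ s : ℝ, K s = K 0 + ∫ t in (0:ℝ)..s, |k t| := fun s =>
    (intervalIntegral.integral_add_adjacent_intervals (habs x₀ 0) (habs 0 s)).symm
  have hKc : Continuous K := contOfPrim habs hKprim
  obtain ⟨M, hM⟩ := isCompact_Icc.exists_bound_of_continuousOn (s := Icc x₀ x)
    hD.continuousOn
  have claim : ∀ n : ℕ, ∀ t ∈ Icc x₀ x, |D t| ≤ M * K t ^ n / n.factorial := by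
    intro n
    induction n with
    | zero => intro t ht; simpa using hM t ht
    | succ n ih =>
      intro t ht
      have ht0 : x₀ ≤ t := ht.1
      have hkD : IntervalIntegrable (fun s => k s * D s) volume x₀ t :=
        (hk x₀ t).mul_continuousOn hD.continuousOn
      have hcn : Continuous (fun s => M * K s ^ n / (n.factorial : ℝ)) :=
        (continuous_const.mul (hKc.pow n)).div_const _
      have hrhsint : IntervalIntegrable
          (fun s => |k s| * (M * K s ^ n / (n.factorial : ℝ))) volume x₀ t :=
        (habs x₀ t).mul_continuousOn hcn.continuousOn
      have hΦd : ∀ y : ℝ, HasDerivAt (fun y : ℝ => y ^ (n+1) / ((n:ℝ)+1)) (y ^ n) y := by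
        intro y
        have h := (hasDerivAt_pow (n+1) y).div_const ((n : ℝ)+1)
        have hn : ((n:ℝ)+1) ≠ 0 := by positivity
        have he : ((n+1 : ℕ) : ℝ) * y ^ (n+1-1) / ((n:ℝ)+1) = y ^ n := by
          rw [Nat.add_sub_cancel]; push_cast; field_simp
        rwa [he] at h
      have hchain := chain habs hKprim hΦd (continuous_pow n) x₀ t
      have hKx₀ : K x₀ = 0 := intervalIntegral.integral_same
      have step1 : |D t| ≤ ∫ s in x₀..t, |k s * D s| := by
        rw [hEq t]
        exact intervalIntegral.abs_integral_le_integral_abs ht0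
      have step2 : (∫ s in x₀..t, |k s * D s|)
          ≤ ∫ s in x₀..t, |k s| * (M * K s ^ n / (n.factorial : ℝ)) := by
        apply intervalIntegral.integral_mono_on ht0 hkD.abs hrhsint
        intro s hs
        rw [abs_mul]
        exact mul_le_mul_of_nonneg_left (ih s ⟨hs.1, hs.2.trans ht.2⟩) (abs_nonneg _)
      have step3 : (∫ s in x₀..t, |k s| * (M * K s ^ n / (n.factorial : ℝ)))
          = (M / (n.factorial : ℝ)) * ∫ s in x₀..t, K s ^ n * |k s| := by
        rw [← intervalIntegral.integral_const_mul]
        exact intervalIntegral.integral_congr fun s _ => by ring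
      have step4 : (∫ s in x₀..t, K s ^ n * |k s|) = K t ^ (n+1) / ((n:ℝ)+1) := by
        have := hchain
        rw [hKx₀] at this
        simp only [zero_pow (Nat.succ_ne_zero n), zero_div, sub_zero] at this
        exact this.symm
      have hfac : ((n+1).factorial : ℝ) = ((n:ℝ)+1) * (n.factorial : ℝ) := by
        rw [Nat.factorial_succ]; push_cast; ring
      calc |D t| ≤ (M / (n.factorial : ℝ)) * (K t ^ (n+1) / ((n:ℝ)+1)) := by
            rw [← step4, ← step3]; exact step1.trans step2
        _ = M * K t ^ (n+1) / ((n+1).factorial : ℝ) := by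
            rw [hfac, div_mul_div_comm, mul_comm ((n.factorial : ℝ)) (((n:ℝ)+1))]
  have hlim : Tendsto (fun n : ℕ => M * K x ^ n / (n.factorial : ℝ)) atTop (nhds 0) := by
    have := (FloorSemiring.tendsto_pow_div_factorial_atTop (K := ℝ) (K x)).const_mul M
    simpa [mul_div_assoc] using this
  have hle : |D x| ≤ 0 :=
    ge_of_tendsto' hlim fun n => claim n x ⟨hx, le_rfl⟩
  exact abs_eq_zero.mp (le_antisymm hle (abs_nonneg _))

/-- Gronwall-type uniqueness, two-sided. -/
lemma gronwall {k D : ℝ → ℝ} (hk : ∀ a b : ℝ, IntervalIntegrable k volume a b)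
    (hD : Continuous D) (x₀ : ℝ)
    (hEq : ∀ x : ℝ, D x = ∫ t in x₀..x, k t * D t) (x : ℝ) : D x = 0 := by
  rcases le_total x₀ x with h | h
  · exact gronwall_right hk hD x₀ hEq x h
  · have hk'int : ∀ a b : ℝ, IntervalIntegrable (fun t => -k (2*x₀ - t)) volume a b := by
      intro a b
      have := ((hk (2*x₀ - a) (2*x₀ - b)).comp_sub_left (2*x₀)).neg
      simpa [Pi.neg_def] using this
    have hD'c : Continuous (fun t => D (2*x₀ - t)) :=
      hD.comp (continuous_const.sub continuous_id)
    have hEq' : ∀ y : ℝ, D (2*x₀ - y) = ∫ t in x₀..y, (-k (2*x₀ - t)) * D (2*x₀ - t) := by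
      intro y
      have h1 : (∫ t in x₀..y, (-k (2*x₀ - t)) * D (2*x₀ - t))
          = - ∫ t in x₀..y, (fun s => k s * D s) (2*x₀ - t) := by
        rw [← intervalIntegral.integral_neg]
        exact intervalIntegral.integral_congr fun t _ => by simp
      rw [h1, intervalIntegral.integral_comp_sub_left (fun s => k s * D s) (2*x₀)]
      rw [show 2*x₀ - x₀ = x₀ from by ring, ← intervalIntegral.integral_symm]
      exact hEq (2*x₀ - y)
    have := gronwall_right hk'int hD'c x₀ hEq' (2*x₀ - x) (by linarith)
    simpa using this

end Stmt9Aux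

/-- Theorem 2.1, Davies-Harrell representations: with `ρ = u·v` and `x₀`
the unique solution of `u(x) = v(x)`,
`u(x) = √ρ(x) exp(-(1/2)∫_{x₀}^x dt/(rρ))`, `v(x) = √ρ(x) exp((1/2)∫_{x₀}^x dt/(rρ))`,
and `G(x,t) = √(ρ(x)ρ(t)) exp(-(1/2)|∫_t^x dξ/(rρ)|)`. -/
theorem stmt_9 (r q u u' v v' : ℝ → ℝ) (h12 : Cond12 r q) (h15 : Cond15 q)
    (hFSS : IsFSS r q u u' v v') (x₀ : ℝ) (hx₀ : u x₀ = v x₀)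
    (hx₀u : ∀ x : ℝ, u x = v x → x = x₀) :
    (∀ x : ℝ, u x = Real.sqrt (u x * v x) *
        Real.exp (-(1 / 2) * ∫ t in x₀..x, (r t * (u t * v t))⁻¹)) ∧
    (∀ x : ℝ, v x = Real.sqrt (u x * v x) *
        Real.exp ((1 / 2) * ∫ t in x₀..x, (r t * (u t * v t))⁻¹)) ∧
    (∀ x t : ℝ, greenK u v x t = Real.sqrt ((u x * v x) * (u t * v t)) *
        Real.exp (-(1 / 2) * |∫ ξ in t..x, (r ξ * (u ξ * v ξ))⁻¹|)) := by
  obtain ⟨hrpos, -, hrint, -⟩ := h12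
  obtain ⟨hu, hv, hupos, hvpos, hv'nn, hu'np, hW, -⟩ := hFSS
  obtain ⟨hu'int, hurep, -, -⟩ := hu
  obtain ⟨hv'int, hvrep, -, -⟩ := hv
  have hucont : Continuous u := Stmt9Aux.contOfPrim hu'int hurep
  have hvcont : Continuous v := Stmt9Aux.contOfPrim hv'int hvrep
  set f : ℝ → ℝ := fun t => (r t * (u t * v t))⁻¹ with hfdef
  have hfpos : ∀ t : ℝ, 0 < r t * (u t * v t) :=
    fun t => mul_pos (hrpos t) (mul_pos (hupos t) (hvpos t))
  have hfnn : ∀ t : ℝ, 0 ≤ f t := fun t => inv_nonneg.mpr (hfpos t).le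
  have hrinv : ∀ a b : ℝ, IntervalIntegrable (fun t => (r t)⁻¹) volume a b := fun a b =>
    (hrint.integrableOn_isCompact isCompact_uIcc).intervalIntegrable
  have huv0 : ∀ t : ℝ, u t * v t ≠ 0 := fun t => (mul_pos (hupos t) (hvpos t)).ne'
  have hfint : ∀ a b : ℝ, IntervalIntegrable f volume a b := by
    intro a b
    have hcont : Continuous fun t => (u t * v t)⁻¹ := (hucont.mul hvcont).inv₀ huv0
    have h := (hrinv a b).mul_continuousOn hcont.continuousOn
    have hfeq : (fun x => (r x)⁻¹ * (u x * v x)⁻¹) = f := by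
      funext t
      show (r t)⁻¹ * (u t * v t)⁻¹ = (r t * (u t * v t))⁻¹
      exact (mul_inv _ _).symm
    rwa [hfeq] at h
  set I : ℝ → ℝ := fun x => ∫ t in x₀..x, f t with hIdef
  have hIadd : ∀ s y : ℝ, I s + ∫ t in s..y, f t = I y := fun s y =>
    intervalIntegral.integral_add_adjacent_intervals (hfint x₀ s) (hfint s y)
  have hIprim : ∀ x : ℝ, I x = I 0 + ∫ t in (0:ℝ)..x, f t := fun x => (hIadd 0 x).symm
  have hIcont : Continuous I := Stmt9Aux.contOfPrim hfint hIprim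
  have hIx₀ : I x₀ = 0 := intervalIntegral.integral_same
  set E : ℝ → ℝ := fun x => Real.exp (-(I x)) with hEdef
  have hEcont : Continuous E := Real.continuous_exp.comp hIcont.neg
  have hnegIprim : ∀ x : ℝ, -(I x) = -(I 0) + ∫ t in (0:ℝ)..x, -f t := by
    intro x
    rw [intervalIntegral.integral_neg, hIprim x]
    ring
  set eE : ℝ → ℝ := fun t => Real.exp (-(I t)) * (-f t) with heEdef
  have heEint : ∀ a b : ℝ, IntervalIntegrable eE volume a b :=
    Stmt9Aux.mulc (c := fun t => Real.exp (-(I t)))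
      (fun a b => (hfint a b).neg) (Real.continuous_exp.comp hIcont.neg)
  have hEprim : ∀ x : ℝ, E x = E 0 + ∫ t in (0:ℝ)..x, eE t := by
    intro x
    have h := Stmt9Aux.chain (f := fun t => -f t) (F := fun y => -(I y))
      (fun a b => (hfint a b).neg) (fun y => hnegIprim y)
      (fun y => Real.hasDerivAt_exp y) Real.continuous_exp 0 x
    simp only [hEdef, heEdef]
    linarith
  have hparts := Stmt9Aux.parts hv'int heEint hvrep hEprim
  set D : ℝ → ℝ := fun x => v x * E x - u x with hDdef
  set k : ℝ → ℝ := fun t => u' t * (u t)⁻¹ with hkdef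
  have hkint : ∀ a b : ℝ, IntervalIntegrable k volume a b := fun a b =>
    (hu'int a b).mul_continuousOn (hucont.inv₀ fun t => (hupos t).ne').continuousOn
  have h3 : ∀ t : ℝ, v t * eE t + v' t * E t - u' t = k t * D t := by
    intro t
    have hWt := hW t
    have hr0 : r t ≠ 0 := (hrpos t).ne'
    have hu0 : u t ≠ 0 := (hupos t).ne'
    have hv0 : v t ≠ 0 := (hvpos t).ne'
    have key : v' t - f t * v t = u' t * v t * (u t)⁻¹ := by
      have hA : f t * v t = (r t * u t)⁻¹ := by
        show (r t * (u t * v t))⁻¹ * v t = (r t * u t)⁻¹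
        rw [show r t * (u t * v t) = r t * u t * v t from by ring, mul_inv,
          mul_assoc, inv_mul_cancel₀ hv0, mul_one]
      have hWt' : (r t)⁻¹ = v' t * u t - u' t * v t :=
        inv_eq_of_mul_eq_one_right hWt
      rw [hA, mul_inv, hWt']
      field_simp
      ring
    calc v t * eE t + v' t * E t - u' t
        = E t * (v' t - f t * v t) - u' t := by
          simp only [heEdef, hEdef]; ring
      _ = E t * (u' t * v t * (u t)⁻¹) - u' t := by rw [key]
      _ = k t * D t := by
          simp only [hkdef, hDdef]
          field_simp
  have hDeq : ∀ x : ℝ, D x = ∫ t in x₀..x, k t * D t := by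
    intro x
    have h1 := hparts x₀ x
    have h2 : u x - u x₀ = ∫ t in x₀..x, u' t := by
      rw [Stmt9Aux.primShift hu'int hurep x₀ x]; ring
    have hEx₀ : E x₀ = 1 := by rw [hEdef]; simp [hIx₀]
    have hintVE : IntervalIntegrable (fun t => v t * eE t + v' t * E t) volume x₀ x := by
      have i1 : IntervalIntegrable (fun t => v t * eE t) volume x₀ x :=
        Stmt9Aux.mulc (c := v) heEint hvcont x₀ x
      have i2 : IntervalIntegrable (fun t => v' t * E t) volume x₀ x :=
        (hv'int x₀ x).mul_continuousOn hEcont.continuousOn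
      exact i1.add i2
    calc D x = (v x * E x - v x₀ * E x₀) - (u x - u x₀) := by
          rw [hDdef]
          simp only
          rw [hEx₀, hx₀]
          ring
      _ = ∫ t in x₀..x, (v t * eE t + v' t * E t - u' t) := by
          rw [h1, h2, ← intervalIntegral.integral_sub hintVE (hu'int x₀ x)]
      _ = ∫ t in x₀..x, k t * D t :=
          intervalIntegral.integral_congr fun t _ => h3 t
  have hDcont : Continuous D := (hvcont.mul hEcont).sub hucont
  have hvE : ∀ x : ℝ, v x * Real.exp (-(I x)) = u x := by
    intro x
    have h := Stmt9Aux.gronwall hkint hDcont x₀ hDeq x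
    simp only [hDdef, hEdef] at h
    linarith
  have hvrep2 : ∀ x : ℝ, v x = u x * Real.exp (I x) := by
    intro x
    rw [← hvE x, mul_assoc, ← Real.exp_add,
      show -(I x) + I x = 0 from by ring, Real.exp_zero, mul_one]
  have hsqrt : ∀ x : ℝ, Real.sqrt (u x * v x) = u x * Real.exp (I x / 2) := by
    intro x
    have hsq : u x * v x = (u x * Real.exp (I x / 2)) ^ 2 := by
      rw [hvrep2 x]
      calc u x * (u x * Real.exp (I x))
          = u x * (u x * Real.exp (I x / 2 + I x / 2)) := by
            rw [show I x / 2 + I x / 2 = I x from by ring]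
        _ = (u x * Real.exp (I x / 2)) ^ 2 := by rw [Real.exp_add]; ring
    rw [hsq, Real.sqrt_sq (mul_nonneg (hupos x).le (Real.exp_pos _).le)]
  refine ⟨?_, ?_, ?_⟩
  · intro x
    have : Real.sqrt (u x * v x) * Real.exp (-(1/2) * I x) = u x := by
      rw [hsqrt x, mul_assoc, ← Real.exp_add,
        show I x / 2 + -(1/2) * I x = 0 from by ring, Real.exp_zero, mul_one]
    exact this.symm
  · intro x
    have : Real.sqrt (u x * v x) * Real.exp ((1/2) * I x) = v x := by
      rw [hsqrt x, mul_assoc, ← Real.exp_add,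
        show I x / 2 + (1/2) * I x = I x from by ring, ← hvrep2 x]
    exact this.symm
  · intro x t
    have hit : ∀ s y : ℝ, (∫ ξ in s..y, f ξ) = I y - I s := by
      intro s y
      have := hIadd s y
      linarith
    simp only [greenK]
    split_ifs with h
    · have habs : |∫ ξ in t..x, f ξ| = I x - I t := by
        rw [hit t x, abs_of_nonneg]
        have h0 : 0 ≤ ∫ ξ in t..x, f ξ :=
          intervalIntegral.integral_nonneg h fun s _ => hfnn s
        rw [hit t x] at h0
        exact h0
      have : Real.sqrt (u x * v x * (u t * v t)) * Real.exp (-(1/2) * |∫ ξ in t..x, f ξ|)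
          = u x * v t := by
        rw [habs, Real.sqrt_mul (mul_nonneg (hupos x).le (hvpos x).le),
          hsqrt x, hsqrt t]
        calc u x * Real.exp (I x / 2) * (u t * Real.exp (I t / 2)) *
              Real.exp (-(1/2) * (I x - I t))
            = u x * u t * (Real.exp (I x / 2) * Real.exp (I t / 2) *
                Real.exp (-(1/2) * (I x - I t))) := by ring
          _ = u x * u t * Real.exp (I x / 2 + I t / 2 + -(1/2) * (I x - I t)) := by
              rw [Real.exp_add, Real.exp_add]
          _ = u x * u t * Real.exp (I t) := by
              rw [show I x / 2 + I t / 2 + -(1/2) * (I x - I t) = I t from by ring]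
          _ = u x * v t := by rw [hvrep2 t]; ring
      exact this.symm
    · have hxt : x ≤ t := (not_le.mp h).le
      have habs : |∫ ξ in t..x, f ξ| = I t - I x := by
        rw [hit t x, abs_of_nonpos]
        · ring
        · have h0 : 0 ≤ ∫ ξ in x..t, f ξ :=
            intervalIntegral.integral_nonneg hxt fun s _ => hfnn s
          rw [hit x t] at h0
          linarith
      have : Real.sqrt (u x * v x * (u t * v t)) * Real.exp (-(1/2) * |∫ ξ in t..x, f ξ|)
          = u t * v x := by
        rw [habs, Real.sqrt_mul (mul_nonneg (hupos x).le (hvpos x).le),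
          hsqrt x, hsqrt t]
        calc u x * Real.exp (I x / 2) * (u t * Real.exp (I t / 2)) *
              Real.exp (-(1/2) * (I t - I x))
            = u t * u x * (Real.exp (I x / 2) * Real.exp (I t / 2) *
                Real.exp (-(1/2) * (I t - I x))) := by ring
          _ = u t * u x * Real.exp (I x / 2 + I t / 2 + -(1/2) * (I t - I x)) := by
              rw [Real.exp_add, Real.exp_add]
          _ = u t * u x * Real.exp (I x) := by
              rw [show I x / 2 + I t / 2 + -(1/2) * (I t - I x) = I x from by ring]
          _ = u t * v x := by rw [hvrep2 x]; ring
      exact this.symm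


end
end

section
/- Suppose conditions (1.2) and (1.6) hold. Then for all x ∈ ℝ the following two-sided estimates hold: 2⁻¹v(x) ≤ r(x)v'(x)φ(x) ≤ 2v(x) and 2⁻¹u(x) ≤ r(x)|u'(x)|ψ(x) ≤ 2u(x). -/
open MeasureTheory Set Filter
open scoped ENNReal

noncomputable section

private lemma locInt_intervalInt {f : ℝ → ℝ} (hf : LocallyIntegrable f volume) (a b : ℝ) :
    IntervalIntegrable f volume a b :=
  (hf.integrableOn_isCompact isCompact_uIcc).intervalIntegrable

private lemma diff_int {g g' : ℝ → ℝ}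
    (hint : ∀ a b : ℝ, IntervalIntegrable g' volume a b)
    (heq : ∀ x : ℝ, g x = g 0 + ∫ t in (0:ℝ)..x, g' t) (a b : ℝ) :
    g b - g a = ∫ t in a..b, g' t := by
  have h := intervalIntegral.integral_add_adjacent_intervals (hint 0 a) (hint a b)
  rw [heq a, heq b]
  linarith

/-- Lemma 2.3: under (1.2) and (1.6), for all `x ∈ ℝ`:
`2⁻¹ v(x) ≤ r(x)v'(x)φ(x) ≤ 2v(x)` and `2⁻¹ u(x) ≤ r(x)|u'(x)|ψ(x) ≤ 2u(x)`. -/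
theorem stmt_10 (r q u u' v v' d1 d2 : ℝ → ℝ) (h12 : Cond12 r q) (h16 : Cond16 r q)
    (hFSS : IsFSS r q u u' v v') (hd1 : IsD1 r q d1) (hd2 : IsD2 r q d2) :
    ∀ x : ℝ,
      (2⁻¹ * v x ≤ r x * v' x * phiF r d1 x ∧ r x * v' x * phiF r d1 x ≤ 2 * v x) ∧
      (2⁻¹ * u x ≤ r x * |u' x| * psiF r d2 x ∧ r x * |u' x| * psiF r d2 x ≤ 2 * u x) := by
  obtain ⟨hrpos, hqpos, hrint, hqint⟩ := h12
  obtain ⟨hu, hv, hupos, hvpos, hv'pos, hu'neg, hwron, -⟩ := hFSS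
  obtain ⟨hu'int, huEq, hquint, huW⟩ := hu
  obtain ⟨hv'int, hvEq, hqvint, hvW⟩ := hv
  have hvmono : ∀ a b : ℝ, a ≤ b → v a ≤ v b := by
    intro a b hab
    have h := diff_int hv'int hvEq a b
    have h2 : 0 ≤ ∫ t in a..b, v' t :=
      intervalIntegral.integral_nonneg hab (fun t _ => hv'pos t)
    linarith
  have humono : ∀ a b : ℝ, a ≤ b → u b ≤ u a := by
    intro a b hab
    have h := diff_int hu'int huEq a b
    have h2 : ∫ t in a..b, u' t ≤ ∫ t in a..b, (0:ℝ) :=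
      intervalIntegral.integral_mono_on hab (hu'int a b) intervalIntegrable_const
        (fun t _ => hu'neg t)
    simp only [intervalIntegral.integral_const, smul_zero] at h2
    linarith
  have hWvmono : ∀ s t : ℝ, s ≤ t → r s * v' s ≤ r t * v' t := by
    intro s t hst
    have h := diff_int (g := fun x => r x * v' x) hqvint hvW s t
    have h2 : 0 ≤ ∫ τ in s..t, (q τ * v τ - (fun _ => (0:ℝ)) τ) :=
      intervalIntegral.integral_nonneg hst
        (fun τ _ => by simpa using mul_nonneg (hqpos τ) (hvpos τ).le)
    simp only at h h2
    linarith
  have hWumono : ∀ s t : ℝ, s ≤ t → r s * u' s ≤ r t * u' t := by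
    intro s t hst
    have h := diff_int (g := fun x => r x * u' x) hquint huW s t
    have h2 : 0 ≤ ∫ τ in s..t, (q τ * u τ - (fun _ => (0:ℝ)) τ) :=
      intervalIntegral.integral_nonneg hst
        (fun τ _ => by simpa using mul_nonneg (hqpos τ) (hupos τ).le)
    simp only at h h2
    linarith
  intro x
  constructor
  · -- v-part
    obtain ⟨hdpos, hF1⟩ := hd1 x
    set a := x - d1 x with ha
    have hax : a ≤ x := by rw [ha]; linarith
    set φ := ∫ t in a..x, (r t)⁻¹ with hφ
    set Q := ∫ t in a..x, q t with hQdef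
    have hφQ : φ * Q = 1 := hF1
    have hφ0 : 0 ≤ φ := intervalIntegral.integral_nonneg hax
      (fun t _ => inv_nonneg.2 (hrpos t).le)
    have hQ0 : 0 ≤ Q := intervalIntegral.integral_nonneg hax (fun t _ => hqpos t)
    have hφpos : 0 < φ := by nlinarith
    have hrI : IntervalIntegrable (fun t => (r t)⁻¹) volume a x := locInt_intervalInt hrint a x
    have hqI : IntervalIntegrable q volume a x := locInt_intervalInt hqint a x
    have hkey1 : v x - v a ≤ (r x * v' x) * φ := by
      have h := diff_int hv'int hvEq a x
      have hle : (∫ t in a..x, v' t) ≤ ∫ t in a..x, (r x * v' x) * (r t)⁻¹ := by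
        apply intervalIntegral.integral_mono_on hax (hv'int a x) (hrI.const_mul _)
        intro t ht
        have hrt := hrpos t
        have hWt := hWvmono t x ht.2
        calc v' t = (r t * v' t) * (r t)⁻¹ := by field_simp
          _ ≤ (r x * v' x) * (r t)⁻¹ :=
            mul_le_mul_of_nonneg_right hWt (inv_nonneg.2 hrt.le)
      rw [intervalIntegral.integral_const_mul] at hle
      linarith
    have hkey2 : v a ≤ (r x * v' x) * φ := by
      have hWa : 0 ≤ r a * v' a := mul_nonneg (hrpos a).le (hv'pos a)
      have hle : (∫ t in a..x, v a * q t) ≤ ∫ t in a..x, (q t * v t - (fun _ => (0:ℝ)) t) := by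
        apply intervalIntegral.integral_mono_on hax (hqI.const_mul _) (hqvint a x)
        intro t ht
        have := hvmono a t ht.1
        simp only [sub_zero]
        nlinarith [hqpos t]
      rw [intervalIntegral.integral_const_mul] at hle
      have hdiff := diff_int (g := fun x => r x * v' x) hqvint hvW a x
      simp only at hdiff
      have hWx : v a * Q ≤ r x * v' x := by linarith
      calc v a = (v a * Q) * φ := by rw [mul_assoc, mul_comm Q φ, hφQ, mul_one]
        _ ≤ (r x * v' x) * φ := mul_le_mul_of_nonneg_right hWx hφ0
    have hkey3 : (r a * v' a) * φ ≤ v x := by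
      have hle : (∫ t in a..x, (r a * v' a) * (r t)⁻¹) ≤ ∫ t in a..x, v' t := by
        apply intervalIntegral.integral_mono_on hax (hrI.const_mul _) (hv'int a x)
        intro t ht
        have hWt := hWvmono a t ht.1
        have hrt := hrpos t
        calc (r a * v' a) * (r t)⁻¹ ≤ (r t * v' t) * (r t)⁻¹ :=
              mul_le_mul_of_nonneg_right hWt (inv_nonneg.2 hrt.le)
          _ = v' t := by field_simp
      rw [intervalIntegral.integral_const_mul] at hle
      have h := diff_int hv'int hvEq a x
      have := (hvpos a).le
      linarith
    have hkey4 : r x * v' x ≤ r a * v' a + v x * Q := by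
      have hdiff := diff_int (g := fun x => r x * v' x) hqvint hvW a x
      simp only at hdiff
      have hle : (∫ t in a..x, (q t * v t - (fun _ => (0:ℝ)) t)) ≤ ∫ t in a..x, v x * q t := by
        apply intervalIntegral.integral_mono_on hax (hqvint a x) (hqI.const_mul _)
        intro t ht
        have := hvmono t x ht.2
        simp only [sub_zero]
        nlinarith [hqpos t]
      rw [intervalIntegral.integral_const_mul] at hle
      linarith
    have hφeq : phiF r d1 x = φ := rfl
    rw [hφeq]
    have hvx1 : v x * Q * φ = v x := by rw [mul_assoc, mul_comm Q φ, hφQ, mul_one]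
    constructor
    · linarith
    · nlinarith [mul_le_mul_of_nonneg_right hkey4 hφ0, hvx1, hkey3]
  · -- u-part
    obtain ⟨hdpos, hF2⟩ := hd2 x
    set b := x + d2 x with hb
    have hxb : x ≤ b := by rw [hb]; linarith
    set ψ := ∫ t in x..b, (r t)⁻¹ with hψ
    set Q := ∫ t in x..b, q t with hQdef
    have hψQ : ψ * Q = 1 := hF2
    have hψ0 : 0 ≤ ψ := intervalIntegral.integral_nonneg hxb
      (fun t _ => inv_nonneg.2 (hrpos t).le)
    have hQ0 : 0 ≤ Q := intervalIntegral.integral_nonneg hxb (fun t _ => hqpos t)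
    have hψpos : 0 < ψ := by nlinarith
    have hrI : IntervalIntegrable (fun t => (r t)⁻¹) volume x b := locInt_intervalInt hrint x b
    have hqI : IntervalIntegrable q volume x b := locInt_intervalInt hqint x b
    have habs : |u' x| = -u' x := abs_of_nonpos (hu'neg x)
    have hkey1 : u x - u b ≤ (-(r x * u' x)) * ψ := by
      have h := diff_int hu'int huEq x b
      have hle : (∫ t in x..b, (-(r x * u' x)) * (r t)⁻¹) ≥ ∫ t in x..b, -u' t := by
        apply intervalIntegral.integral_mono_on hxb ((hu'int x b).neg) (hrI.const_mul _)
        intro t ht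
        have hrt := hrpos t
        have hWt := hWumono x t ht.1
        calc -u' t = (-(r t * u' t)) * (r t)⁻¹ := by
              rw [neg_mul, mul_comm (r t) (u' t), mul_assoc, mul_inv_cancel₀ (hrpos t).ne', mul_one]
          _ ≤ (-(r x * u' x)) * (r t)⁻¹ :=
            mul_le_mul_of_nonneg_right (by linarith) (inv_nonneg.2 hrt.le)
      rw [intervalIntegral.integral_neg, intervalIntegral.integral_const_mul] at hle
      linarith
    have hkey2 : u b ≤ (-(r x * u' x)) * ψ := by
      have hWb : 0 ≤ -(r b * u' b) := by nlinarith [mul_nonpos_of_nonneg_of_nonpos (hrpos b).le (hu'neg b)]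
      have hle : (∫ t in x..b, u b * q t) ≤ ∫ t in x..b, (q t * u t - (fun _ => (0:ℝ)) t) := by
        apply intervalIntegral.integral_mono_on hxb (hqI.const_mul _) (hquint x b)
        intro t ht
        have := humono t b ht.2
        simp only [sub_zero]
        nlinarith [hqpos t]
      rw [intervalIntegral.integral_const_mul] at hle
      have hdiff := diff_int (g := fun x => r x * u' x) hquint huW x b
      simp only at hdiff
      have hWx : u b * Q ≤ -(r x * u' x) := by linarith
      calc u b = (u b * Q) * ψ := by rw [mul_assoc, mul_comm Q ψ, hψQ, mul_one]
        _ ≤ (-(r x * u' x)) * ψ := mul_le_mul_of_nonneg_right hWx hψ0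
    have hkey3 : (-(r b * u' b)) * ψ ≤ u x := by
      have hle : (∫ t in x..b, (-(r b * u' b)) * (r t)⁻¹) ≤ ∫ t in x..b, -u' t := by
        apply intervalIntegral.integral_mono_on hxb (hrI.const_mul _) ((hu'int x b).neg)
        intro t ht
        have hWt := hWumono t b ht.2
        have hrt := hrpos t
        calc (-(r b * u' b)) * (r t)⁻¹ ≤ (-(r t * u' t)) * (r t)⁻¹ :=
              mul_le_mul_of_nonneg_right (by linarith) (inv_nonneg.2 hrt.le)
          _ = -u' t := by
              rw [neg_mul, mul_comm (r t) (u' t), mul_assoc, mul_inv_cancel₀ (hrpos t).ne', mul_one]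
      rw [intervalIntegral.integral_neg] at hle
      rw [intervalIntegral.integral_const_mul] at hle
      have h := diff_int hu'int huEq x b
      have := (hupos b).le
      linarith
    have hkey4 : -(r x * u' x) ≤ -(r b * u' b) + u x * Q := by
      have hdiff := diff_int (g := fun x => r x * u' x) hquint huW x b
      simp only at hdiff
      have hle : (∫ t in x..b, (q t * u t - (fun _ => (0:ℝ)) t)) ≤ ∫ t in x..b, u x * q t := by
        apply intervalIntegral.integral_mono_on hxb (hquint x b) (hqI.const_mul _)
        intro t ht
        have := humono x t ht.1
        simp only [sub_zero]
        nlinarith [hqpos t]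
      rw [intervalIntegral.integral_const_mul] at hle
      linarith
    have hψeq : psiF r d2 x = ψ := rfl
    rw [hψeq, habs]
    have hux1 : u x * Q * ψ = u x := by rw [mul_assoc, mul_comm Q ψ, hψQ, mul_one]
    have hrw : r x * -u' x * ψ = -(r x * u' x) * ψ := by ring
    rw [hrw]
    constructor
    · linarith
    · nlinarith [mul_le_mul_of_nonneg_right hkey4 hψ0, hux1, hkey3]


end
end

section
/- Let r ≡ 1 and suppose q satisfies conditions (1.2) and (1.5). Then for every x ∈ ℝ, the equation d·∫_{x-d}^{x+d} q(t)dt = 2 in d ≥ 0 has a unique finite positive solution, denoted d̃(x), and the following two-sided estimates hold for all x ∈ ℝ: 4⁻¹d̃(x) ≤ ρ(x) ≤ (3/2)d̃(x), where ρ(x) = u(x)v(x). -/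
open MeasureTheory Set Filter
open scoped ENNReal

noncomputable section

section Stmt12Aux

open intervalIntegral

private lemma stmt12_pos_int_left (q : ℝ → ℝ) (hq : ∀ t, 0 ≤ q t)
    (hqint : ∀ a b : ℝ, IntervalIntegrable q volume a b) (x : ℝ)
    (hpos : 0 < ∫⁻ t in Iic x, ENNReal.ofReal (q t)) :
    ∃ n : ℕ, 0 < ∫ t in (x - (n:ℝ))..x, q t := by
  by_contra hcon
  push_neg at hcon
  have key : ∀ n : ℕ, (∫⁻ t in Ioc (x - (n:ℝ)) x, ENNReal.ofReal (q t)) = 0 := by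
    intro n
    have hle : x - (n:ℝ) ≤ x := by
      have : (0:ℝ) ≤ n := Nat.cast_nonneg n
      linarith
    have hii : IntegrableOn q (Ioc (x - (n:ℝ)) x) volume :=
      (intervalIntegrable_iff_integrableOn_Ioc_of_le hle).1 (hqint _ _)
    have hz : (∫ t in Ioc (x - (n:ℝ)) x, q t) = 0 := by
      have h1 : (0:ℝ) ≤ ∫ t in Ioc (x - (n:ℝ)) x, q t :=
        setIntegral_nonneg measurableSet_Ioc (fun t _ => hq t)
      have h2 := hcon n
      rw [intervalIntegral.integral_of_le hle] at h2
      linarith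
    have hae : q =ᵐ[volume.restrict (Ioc (x - (n:ℝ)) x)] 0 := by
      rw [← integral_eq_zero_iff_of_nonneg (fun t => hq t) hii]
      exact hz
    calc (∫⁻ t in Ioc (x - (n:ℝ)) x, ENNReal.ofReal (q t))
        = ∫⁻ t in Ioc (x - (n:ℝ)) x, 0 := by
          refine lintegral_congr_ae ?_
          filter_upwards [hae] with t ht
          simp [ht]
      _ = 0 := lintegral_zero
  have hcover : Iic x ⊆ ⋃ n : ℕ, Ioc (x - (n:ℝ)) x := by
    intro t ht
    obtain ⟨n, hn⟩ := exists_nat_gt (x - t)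
    exact mem_iUnion.2 ⟨n, by constructor <;> [linarith; exact ht]⟩
  have : (∫⁻ t in Iic x, ENNReal.ofReal (q t)) = 0 := by
    have h1 : (∫⁻ t in Iic x, ENNReal.ofReal (q t)) ≤
        ∫⁻ t in ⋃ n : ℕ, Ioc (x - (n:ℝ)) x, ENNReal.ofReal (q t) :=
      lintegral_mono_set hcover
    have h2 := MeasureTheory.lintegral_iUnion_le (μ := volume)
      (fun n : ℕ => Ioc (x - (n:ℝ)) x) (fun t => ENNReal.ofReal (q t))
    simp only [key, tsum_zero] at h2
    exact le_antisymm (h1.trans h2) zero_le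
  rw [this] at hpos; exact lt_irrefl _ hpos

private lemma stmt12_pos_int_right (q : ℝ → ℝ) (hq : ∀ t, 0 ≤ q t)
    (hqint : ∀ a b : ℝ, IntervalIntegrable q volume a b) (x : ℝ)
    (hpos : 0 < ∫⁻ t in Ici x, ENNReal.ofReal (q t)) :
    ∃ n : ℕ, 0 < ∫ t in x..(x + (n:ℝ)), q t := by
  by_contra hcon
  push_neg at hcon
  have key : ∀ n : ℕ, (∫⁻ t in Ioc x (x + (n:ℝ)), ENNReal.ofReal (q t)) = 0 := by
    intro n
    have hle : x ≤ x + (n:ℝ) := by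
      have : (0:ℝ) ≤ n := Nat.cast_nonneg n
      linarith
    have hii : IntegrableOn q (Ioc x (x + (n:ℝ))) volume :=
      (intervalIntegrable_iff_integrableOn_Ioc_of_le hle).1 (hqint _ _)
    have hz : (∫ t in Ioc x (x + (n:ℝ)), q t) = 0 := by
      have h1 : (0:ℝ) ≤ ∫ t in Ioc x (x + (n:ℝ)), q t :=
        setIntegral_nonneg measurableSet_Ioc (fun t _ => hq t)
      have h2 := hcon n
      rw [intervalIntegral.integral_of_le hle] at h2
      linarith
    have hae : q =ᵐ[volume.restrict (Ioc x (x + (n:ℝ)))] 0 := by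
      rw [← integral_eq_zero_iff_of_nonneg (fun t => hq t) hii]
      exact hz
    calc (∫⁻ t in Ioc x (x + (n:ℝ)), ENNReal.ofReal (q t))
        = ∫⁻ t in Ioc x (x + (n:ℝ)), 0 := by
          refine lintegral_congr_ae ?_
          filter_upwards [hae] with t ht
          simp [ht]
      _ = 0 := lintegral_zero
  have hIoi : (∫⁻ t in Ioi x, ENNReal.ofReal (q t)) = 0 := by
    have hcover : Ioi x ⊆ ⋃ n : ℕ, Ioc x (x + (n:ℝ)) := by
      intro t ht
      obtain ⟨n, hn⟩ := exists_nat_gt (t - x)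
      exact mem_iUnion.2 ⟨n, by constructor <;> [exact ht; linarith]⟩
    have h1 : (∫⁻ t in Ioi x, ENNReal.ofReal (q t)) ≤
        ∫⁻ t in ⋃ n : ℕ, Ioc x (x + (n:ℝ)), ENNReal.ofReal (q t) :=
      lintegral_mono_set hcover
    have h2 := MeasureTheory.lintegral_iUnion_le (μ := volume)
      (fun n : ℕ => Ioc x (x + (n:ℝ))) (fun t => ENNReal.ofReal (q t))
    simp only [key, tsum_zero] at h2
    exact le_antisymm (h1.trans h2) zero_le
  have : (∫⁻ t in Ici x, ENNReal.ofReal (q t)) = 0 := by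
    have hsplit : Ici x = {x} ∪ Ioi x := by
      ext t; simp [le_iff_lt_or_eq, eq_comm, or_comm]
    rw [hsplit]
    have h1 := MeasureTheory.lintegral_union_le (μ := volume)
      (fun t => ENNReal.ofReal (q t)) ({x} : Set ℝ) (Ioi x)
    have h2 : (∫⁻ t in ({x} : Set ℝ), ENNReal.ofReal (q t)) = 0 :=
      setLIntegral_measure_zero _ _ (measure_singleton x)
    rw [h2, hIoi] at h1
    exact le_antisymm (by simpa using h1) zero_le
  rw [this] at hpos; exact lt_irrefl _ hpos

private lemma stmt12_part1 (q : ℝ → ℝ) (hq : ∀ t, 0 ≤ q t)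
    (hqint : ∀ a b : ℝ, IntervalIntegrable q volume a b) (x : ℝ)
    (hL : ∃ n : ℕ, 0 < ∫ t in (x - (n:ℝ))..x, q t)
    (hR : ∃ n : ℕ, 0 < ∫ t in x..(x + (n:ℝ)), q t) :
    ∃! d : ℝ, 0 < d ∧ d * ∫ t in (x - d)..(x + d), q t = 2 := by
  obtain ⟨n, hn⟩ := hL
  obtain ⟨m, hm⟩ := hR
  set I : ℝ → ℝ := fun d => ∫ t in (x - d)..(x + d), q t with hIdef
  set G : ℝ → ℝ := fun y => ∫ t in x..y, q t with hGdef
  have hsplit : ∀ d : ℝ, I d = G (x + d) - G (x - d) := by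
    intro d
    exact (integral_interval_sub_left (hqint x (x + d)) (hqint x (x - d))).symm
  have hGcont : Continuous G := intervalIntegral.continuous_primitive hqint x
  have hIcont : Continuous I := by
    have : I = fun d => G (x + d) - G (x - d) := funext hsplit
    rw [this]
    exact (hGcont.comp (continuous_const.add continuous_id)).sub
      (hGcont.comp (continuous_const.sub continuous_id))
  set F : ℝ → ℝ := fun d => d * I d with hFdef
  have hFcont : Continuous F := continuous_id.mul hIcont
  have hGmono : ∀ a b : ℝ, a ≤ b → G a ≤ G b := by
    intro a b hab
    have h1 : G b - G a = ∫ t in a..b, q t :=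
      integral_interval_sub_left (hqint x b) (hqint x a)
    have h2 : 0 ≤ ∫ t in a..b, q t :=
      intervalIntegral.integral_nonneg hab (fun t _ => hq t)
    linarith
  have hImono : ∀ d₁ d₂ : ℝ, d₁ ≤ d₂ → I d₁ ≤ I d₂ := by
    intro d₁ d₂ h
    rw [hsplit d₁, hsplit d₂]
    have h1 := hGmono (x + d₁) (x + d₂) (by linarith)
    have h2 := hGmono (x - d₂) (x - d₁) (by linarith)
    linarith
  set c : ℝ := (∫ t in (x - (n:ℝ))..x, q t) + (∫ t in x..(x + (m:ℝ)), q t) with hcdef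
  have hc : 0 < c := by positivity
  have hIge : ∀ d : ℝ, (n:ℝ) ≤ d → (m:ℝ) ≤ d → c ≤ I d := by
    intro d hnd hmd
    have hadd : I d = (∫ t in (x - d)..x, q t) + (∫ t in x..(x + d), q t) :=
      (integral_add_adjacent_intervals (hqint (x - d) x) (hqint x (x + d))).symm
    have hL2 : (∫ t in (x - (n:ℝ))..x, q t) ≤ ∫ t in (x - d)..x, q t := by
      have hadd2 : (∫ t in (x - d)..(x - (n:ℝ)), q t) + (∫ t in (x - (n:ℝ))..x, q t)
          = ∫ t in (x - d)..x, q t :=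
        integral_add_adjacent_intervals (hqint _ _) (hqint _ _)
      have : 0 ≤ ∫ t in (x - d)..(x - (n:ℝ)), q t :=
        intervalIntegral.integral_nonneg (by linarith) (fun t _ => hq t)
      linarith
    have hR2 : (∫ t in x..(x + (m:ℝ)), q t) ≤ ∫ t in x..(x + d), q t := by
      have hadd2 : (∫ t in x..(x + (m:ℝ)), q t) + (∫ t in (x + (m:ℝ))..(x + d), q t)
          = ∫ t in x..(x + d), q t :=
        integral_add_adjacent_intervals (hqint _ _) (hqint _ _)
      have : 0 ≤ ∫ t in (x + (m:ℝ))..(x + d), q t :=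
        intervalIntegral.integral_nonneg (by linarith) (fun t _ => hq t)
      linarith
    rw [hadd, hcdef]
    linarith
  set D : ℝ := max (max (n:ℝ) (m:ℝ)) (2 / c) with hDdef
  have hD0 : (0:ℝ) ≤ D := by
    have : (0:ℝ) ≤ (n:ℝ) := Nat.cast_nonneg n
    have h2 : (n:ℝ) ≤ D := le_trans (le_max_left _ _) (le_max_left _ _)
    linarith
  have hFD : 2 ≤ F D := by
    have h1 : c ≤ I D := hIge D (le_trans (le_max_left _ _) (le_max_left _ _))
      (le_trans (le_max_right _ _) (le_max_left _ _))
    have h2 : 2 / c ≤ D := le_max_right _ _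
    have h3 : 2 = (2 / c) * c := by field_simp
    calc (2:ℝ) = (2 / c) * c := h3
      _ ≤ D * c := by
          apply mul_le_mul_of_nonneg_right h2 hc.le
      _ ≤ D * I D := by
          apply mul_le_mul_of_nonneg_left h1 hD0
  have hF0 : F 0 = 0 := by simp [hFdef]
  have hmem : (2:ℝ) ∈ Icc (F 0) (F D) := by
    rw [hF0]; exact ⟨by norm_num, hFD⟩
  obtain ⟨d, hdmem, hFd⟩ := intermediate_value_Icc hD0 hFcont.continuousOn hmem
  have huniq : ∀ d₁ d₂ : ℝ, 0 < d₁ → d₁ < d₂ → F d₁ = 2 → F d₂ ≠ 2 := by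
    intro d₁ d₂ h1 h12 hF1 hF2
    have hF1' : d₁ * I d₁ = 2 := hF1
    have hF2' : d₂ * I d₂ = 2 := hF2
    have hI1 : 0 < I d₁ := by nlinarith
    have hImono2 : I d₁ ≤ I d₂ := hImono d₁ d₂ h12.le
    nlinarith
  have hd0 : 0 < d := by
    rcases eq_or_lt_of_le hdmem.1 with h | h
    · exfalso; rw [← h] at hFd; rw [hF0] at hFd; norm_num at hFd
    · exact h
  refine ⟨d, ⟨hd0, hFd⟩, ?_⟩
  intro y hy
  obtain ⟨hy0, hyF⟩ := hy
  by_contra hne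
  rcases lt_or_gt_of_ne hne with h | h
  · exact huniq y d hy0 h hyF hFd
  · exact huniq d y hd0 h hFd hyF

private lemma stmt12_bound_algebra (ux vx u'x v'x uδ vδ δ M₁ M₂ : ℝ)
    (hu : 0 < ux) (hv : 0 < vx) (hδ : 0 < δ) (hM1 : 0 ≤ M₁) (hM2 : 0 ≤ M₂)
    (hW : v'x * ux - u'x * vx = 1)
    (hMsum : δ * (M₁ + M₂) = 2)
    (hA : uδ * M₂ ≤ -u'x) (hB : vδ * M₁ ≤ v'x)
    (hAu : ux ≤ uδ - δ * u'x) (hBv : vx ≤ vδ + δ * v'x)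
    (hA' : 0 < ux + δ * u'x + δ * (ux * M₂))
    (hB' : 0 < vx - δ * v'x + δ * (vx * M₁)) :
    4⁻¹ * δ ≤ ux * vx ∧ ux * vx ≤ (3 / 2) * δ := by
  constructor
  · have h1 : 0 < (ux + δ * u'x + δ * (ux * M₂)) * vx := mul_pos hA' hv
    have h2 : 0 < (vx - δ * v'x + δ * (vx * M₁)) * ux := mul_pos hB' hu
    have hMuv : δ * (M₁ + M₂) * (ux * vx) = 2 * (ux * vx) := by rw [hMsum]
    have hWδ : δ * (v'x * ux - u'x * vx) = δ := by rw [hW]; ring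
    nlinarith [h1, h2, hMuv, hWδ]
  · have hA2 : M₂ * ux ≤ (-u'x) * (1 + δ * M₂) := by
      nlinarith [hA, mul_le_mul_of_nonneg_left hAu hM2]
    have hB2 : M₁ * vx ≤ v'x * (1 + δ * M₁) := by
      nlinarith [hB, mul_le_mul_of_nonneg_left hBv hM1]
    have h1pM2 : (0:ℝ) ≤ 1 + δ * M₂ := by nlinarith
    have h1pM1 : (0:ℝ) ≤ 1 + δ * M₁ := by nlinarith
    have hpos1 : 0 ≤ ux * (1 + δ * M₂) := mul_nonneg hu.le h1pM2
    have hpos2 : 0 ≤ vx * (1 + δ * M₁) := mul_nonneg hv.le h1pM1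
    have key1 := mul_le_mul_of_nonneg_right hB2 hpos1
    have key2 := mul_le_mul_of_nonneg_right hA2 hpos2
    have hW2 : (v'x * ux - u'x * vx) * ((1 + δ * M₁) * (1 + δ * M₂))
        = (1 + δ * M₁) * (1 + δ * M₂) := by rw [hW]; ring
    have step1 : ux * vx * (M₁ + M₂ + 2 * δ * (M₁ * M₂)) ≤ (1 + δ * M₁) * (1 + δ * M₂) := by
      nlinarith [key1, key2, hW2]
    have key3 : δ * (ux * vx * (M₁ + M₂ + 2 * δ * (M₁ * M₂)))
        ≤ δ * ((1 + δ * M₁) * (1 + δ * M₂)) := mul_le_mul_of_nonneg_left step1 hδ.le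
    have hMuv : δ * (M₁ + M₂) * (ux * vx) = 2 * (ux * vx) := by rw [hMsum]
    have hMδ : δ * (M₁ + M₂) * δ = 2 * δ := by rw [hMsum]
    have hT : (0:ℝ) ≤ δ * δ * (M₁ * M₂) :=
      mul_nonneg (mul_nonneg hδ.le hδ.le) (mul_nonneg hM1 hM2)
    have hT3 : (0:ℝ) ≤ δ * δ * δ * (M₁ * M₂) :=
      mul_nonneg (mul_nonneg (mul_nonneg hδ.le hδ.le) hδ.le) (mul_nonneg hM1 hM2)
    nlinarith [key3, hMuv, hMδ, hT, hT3]

private lemma stmt12_estimates (q u u' v v' : ℝ → ℝ) (hq : ∀ t, 0 ≤ q t)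
    (hqint : ∀ a b : ℝ, IntervalIntegrable q volume a b)
    (hquint : ∀ a b : ℝ, IntervalIntegrable (fun t => q t * u t) volume a b)
    (hqvint : ∀ a b : ℝ, IntervalIntegrable (fun t => q t * v t) volume a b)
    (hu'int : ∀ a b : ℝ, IntervalIntegrable u' volume a b)
    (hv'int : ∀ a b : ℝ, IntervalIntegrable v' volume a b)
    (hudiff : ∀ a b : ℝ, u b = u a + ∫ t in a..b, u' t)
    (hvdiff : ∀ a b : ℝ, v b = v a + ∫ t in a..b, v' t)
    (hu'diff : ∀ a b : ℝ, u' b = u' a + ∫ t in a..b, q t * u t)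
    (hv'diff : ∀ a b : ℝ, v' b = v' a + ∫ t in a..b, q t * v t)
    (hupos : ∀ t, 0 < u t) (hvpos : ∀ t, 0 < v t)
    (hv'0 : ∀ t, 0 ≤ v' t) (hu'0 : ∀ t, u' t ≤ 0)
    (x δ : ℝ) (hδ : 0 < δ) :
    (u (x+δ) * (∫ t in x..(x+δ), q t) ≤ -u' x) ∧
    (v (x-δ) * (∫ t in (x-δ)..x, q t) ≤ v' x) ∧
    (u x ≤ u (x+δ) - δ * u' x) ∧
    (v x ≤ v (x-δ) + δ * v' x) ∧
    (0 < u x + δ * u' x + δ * (u x * (∫ t in x..(x+δ), q t))) ∧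
    (0 < v x - δ * v' x + δ * (v x * (∫ t in (x-δ)..x, q t))) := by
  have hum : ∀ a b : ℝ, a ≤ b → u b ≤ u a := by
    intro a b hab
    have h1 := hudiff a b
    have h2 : (0:ℝ) ≤ ∫ t in a..b, -u' t :=
      intervalIntegral.integral_nonneg hab (fun t _ => by simpa using hu'0 t)
    rw [intervalIntegral.integral_neg] at h2
    linarith
  have hvm : ∀ a b : ℝ, a ≤ b → v a ≤ v b := by
    intro a b hab
    have h1 := hvdiff a b
    have h2 : (0:ℝ) ≤ ∫ t in a..b, v' t :=
      intervalIntegral.integral_nonneg hab (fun t _ => hv'0 t)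
    linarith
  have hu'm : ∀ a b : ℝ, a ≤ b → u' a ≤ u' b := by
    intro a b hab
    have h1 := hu'diff a b
    have h2 : (0:ℝ) ≤ ∫ t in a..b, q t * u t :=
      intervalIntegral.integral_nonneg hab (fun t _ => mul_nonneg (hq t) (hupos t).le)
    linarith
  have hv'm : ∀ a b : ℝ, a ≤ b → v' a ≤ v' b := by
    intro a b hab
    have h1 := hv'diff a b
    have h2 : (0:ℝ) ≤ ∫ t in a..b, q t * v t :=
      intervalIntegral.integral_nonneg hab (fun t _ => mul_nonneg (hq t) (hvpos t).le)
    linarith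
  refine ⟨?_, ?_, ?_, ?_, ?_, ?_⟩
  · have h1 := hu'diff x (x+δ)
    have h2 : ∫ t in x..(x+δ), q t * u (x+δ) ≤ ∫ t in x..(x+δ), q t * u t :=
      integral_mono_on (by linarith) ((hqint x (x+δ)).mul_const _) (hquint x (x+δ))
        (fun t ht => mul_le_mul_of_nonneg_left (hum t (x+δ) ht.2) (hq t))
    have h3 : (∫ t in x..(x+δ), q t * u (x+δ)) = (∫ t in x..(x+δ), q t) * u (x+δ) :=
      intervalIntegral.integral_mul_const _ _
    have h4 := hu'0 (x+δ)
    nlinarith [h1, h2, h3, h4]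
  · have h1 := hv'diff (x-δ) x
    have h2 : ∫ t in (x-δ)..x, q t * v (x-δ) ≤ ∫ t in (x-δ)..x, q t * v t :=
      integral_mono_on (by linarith) ((hqint (x-δ) x).mul_const _) (hqvint (x-δ) x)
        (fun t ht => mul_le_mul_of_nonneg_left (hvm (x-δ) t ht.1) (hq t))
    have h3 : (∫ t in (x-δ)..x, q t * v (x-δ)) = (∫ t in (x-δ)..x, q t) * v (x-δ) :=
      intervalIntegral.integral_mul_const _ _
    have h4 := hv'0 (x-δ)
    nlinarith [h1, h2, h3, h4]
  · have h1 := hudiff x (x+δ)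
    have h2 : ∫ t in x..(x+δ), (fun _ : ℝ => u' x) t ≤ ∫ t in x..(x+δ), u' t :=
      integral_mono_on (by linarith) intervalIntegrable_const (hu'int _ _)
        (fun t ht => hu'm x t ht.1)
    rw [intervalIntegral.integral_const] at h2
    simp only [smul_eq_mul, add_sub_cancel_left] at h2
    linarith
  · have h1 := hvdiff (x-δ) x
    have h2 : ∫ t in (x-δ)..x, v' t ≤ ∫ t in (x-δ)..x, (fun _ : ℝ => v' x) t :=
      integral_mono_on (by linarith) (hv'int _ _) intervalIntegrable_const
        (fun t ht => hv'm t x ht.2)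
    rw [intervalIntegral.integral_const] at h2
    simp only [smul_eq_mul, sub_sub_cancel] at h2
    linarith
  · have hpt : ∀ t ∈ Icc x (x+δ), u' t ≤ u' x + u x * (∫ s in x..(x+δ), q s) := by
      intro t ht
      have h1 := hu'diff x t
      have h2 : ∫ s in x..t, q s * u s ≤ ∫ s in x..t, q s * u x :=
        integral_mono_on ht.1 (hquint x t) ((hqint x t).mul_const _)
          (fun s hs => mul_le_mul_of_nonneg_left (hum x s hs.1) (hq s))
      have h3 : (∫ s in x..t, q s * u x) = (∫ s in x..t, q s) * u x :=
        intervalIntegral.integral_mul_const _ _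
      have h4 : (∫ s in x..t, q s) ≤ ∫ s in x..(x+δ), q s := by
        have hadd := integral_add_adjacent_intervals (hqint x t) (hqint t (x+δ))
        have h5 : (0:ℝ) ≤ ∫ s in t..(x+δ), q s :=
          intervalIntegral.integral_nonneg ht.2 (fun s _ => hq s)
        linarith
      have h6 : (∫ s in x..t, q s) * u x ≤ (∫ s in x..(x+δ), q s) * u x :=
        mul_le_mul_of_nonneg_right h4 (hupos x).le
      nlinarith [h1, h2, h3, h6]
    have h7 : ∫ t in x..(x+δ), u' t ≤
        ∫ t in x..(x+δ), (fun _ : ℝ => u' x + u x * (∫ s in x..(x+δ), q s)) t :=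
      integral_mono_on (by linarith) (hu'int _ _) intervalIntegrable_const hpt
    rw [intervalIntegral.integral_const] at h7
    simp only [smul_eq_mul, add_sub_cancel_left] at h7
    have h8 := hudiff x (x+δ)
    have h9 := hupos (x+δ)
    nlinarith [h7, h8, h9]
  · have hpt : ∀ t ∈ Icc (x-δ) x, v' x - v x * (∫ s in (x-δ)..x, q s) ≤ v' t := by
      intro t ht
      have h1 := hv'diff t x
      have h2 : ∫ s in t..x, q s * v s ≤ ∫ s in t..x, q s * v x :=
        integral_mono_on ht.2 (hqvint t x) ((hqint t x).mul_const _)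
          (fun s hs => mul_le_mul_of_nonneg_left (hvm s x hs.2) (hq s))
      have h3 : (∫ s in t..x, q s * v x) = (∫ s in t..x, q s) * v x :=
        intervalIntegral.integral_mul_const _ _
      have h4 : (∫ s in t..x, q s) ≤ ∫ s in (x-δ)..x, q s := by
        have hadd := integral_add_adjacent_intervals (hqint (x-δ) t) (hqint t x)
        have h5 : (0:ℝ) ≤ ∫ s in (x-δ)..t, q s :=
          intervalIntegral.integral_nonneg ht.1 (fun s _ => hq s)
        linarith
      have h6 : (∫ s in t..x, q s) * v x ≤ (∫ s in (x-δ)..x, q s) * v x :=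
        mul_le_mul_of_nonneg_right h4 (hvpos x).le
      nlinarith [h1, h2, h3, h6]
    have h7 : ∫ t in (x-δ)..x, (fun _ : ℝ => v' x - v x * (∫ s in (x-δ)..x, q s)) t ≤
        ∫ t in (x-δ)..x, v' t :=
      integral_mono_on (by linarith) intervalIntegrable_const (hv'int _ _) hpt
    rw [intervalIntegral.integral_const] at h7
    simp only [smul_eq_mul, sub_sub_cancel] at h7
    have h8 := hvdiff (x-δ) x
    have h9 := hvpos (x-δ)
    nlinarith [h7, h8, h9]

end Stmt12Aux


/-- Lemma 2.6: for `r ≡ 1` and `q` satisfying (1.2) and (1.5), for every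
`x` the equation `d·∫_{x-d}^{x+d} q = 2` has a unique positive solution `d̃(x)`, and
`4⁻¹ d̃(x) ≤ ρ(x) ≤ (3/2) d̃(x)` where `ρ = u·v`. -/
theorem stmt_12 (q u u' v v' : ℝ → ℝ) (hq : ∀ x : ℝ, 0 ≤ q x)
    (hqi : LocallyIntegrable q volume) (h15 : Cond15 q)
    (hFSS : IsFSS (fun _ => 1) q u u' v v') :
    (∀ x : ℝ, ∃! d : ℝ, 0 < d ∧ d * ∫ t in (x - d)..(x + d), q t = 2) ∧
    ∀ dt : ℝ → ℝ, (∀ x : ℝ, 0 < dt x ∧ dt x * ∫ t in (x - dt x)..(x + dt x), q t = 2) →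
      ∀ x : ℝ, 4⁻¹ * dt x ≤ u x * v x ∧ u x * v x ≤ (3 / 2) * dt x := by
  obtain ⟨hu, hv, hupos, hvpos, hv'0, hu'0, hW, -, -, -, -, -, -⟩ := hFSS
  obtain ⟨hu'int, hurep, hquint0, hu'rep⟩ := hu
  obtain ⟨hv'int, hvrep, hqvint0, hv'rep⟩ := hv
  have hqint : ∀ a b : ℝ, IntervalIntegrable q volume a b := by
    intro a b
    rw [intervalIntegrable_iff]
    exact (hqi.integrableOn_isCompact isCompact_uIcc).mono_set Set.uIoc_subset_uIcc
  have hquint : ∀ a b : ℝ, IntervalIntegrable (fun t => q t * u t) volume a b := by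
    intro a b; simpa using hquint0 a b
  have hqvint : ∀ a b : ℝ, IntervalIntegrable (fun t => q t * v t) volume a b := by
    intro a b; simpa using hqvint0 a b
  have hudiff : ∀ a b : ℝ, u b = u a + ∫ t in a..b, u' t := by
    intro a b
    have h1 := hurep a
    have h2 := hurep b
    have h3 := intervalIntegral.integral_add_adjacent_intervals (hu'int 0 a) (hu'int a b)
    linarith
  have hvdiff : ∀ a b : ℝ, v b = v a + ∫ t in a..b, v' t := by
    intro a b
    have h1 := hvrep a
    have h2 := hvrep b
    have h3 := intervalIntegral.integral_add_adjacent_intervals (hv'int 0 a) (hv'int a b)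
    linarith
  have hu'diff : ∀ a b : ℝ, u' b = u' a + ∫ t in a..b, q t * u t := by
    intro a b
    have h1 := hu'rep a
    have h2 := hu'rep b
    simp only [one_mul, sub_zero] at h1 h2
    have h3 := intervalIntegral.integral_add_adjacent_intervals (hquint 0 a) (hquint a b)
    linarith
  have hv'diff : ∀ a b : ℝ, v' b = v' a + ∫ t in a..b, q t * v t := by
    intro a b
    have h1 := hv'rep a
    have h2 := hv'rep b
    simp only [one_mul, sub_zero] at h1 h2
    have h3 := intervalIntegral.integral_add_adjacent_intervals (hqvint 0 a) (hqvint a b)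
    linarith
  constructor
  · intro x
    exact stmt12_part1 q hq hqint x
      (stmt12_pos_int_left q hq hqint x (h15 x).1)
      (stmt12_pos_int_right q hq hqint x (h15 x).2)
  · intro dt hdt x
    obtain ⟨hδ, heq⟩ := hdt x
    have hWx : v' x * u x - u' x * v x = 1 := by simpa using hW x
    obtain ⟨hA, hB, hAu, hBv, hA', hB'⟩ :=
      stmt12_estimates q u u' v v' hq hqint hquint hqvint hu'int hv'int
        hudiff hvdiff hu'diff hv'diff hupos hvpos hv'0 hu'0 x (dt x) hδ
    have hM1 : (0:ℝ) ≤ ∫ t in (x - dt x)..x, q t :=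
      intervalIntegral.integral_nonneg (by linarith) (fun t _ => hq t)
    have hM2 : (0:ℝ) ≤ ∫ t in x..(x + dt x), q t :=
      intervalIntegral.integral_nonneg (by linarith) (fun t _ => hq t)
    have hMsum : dt x * ((∫ t in (x - dt x)..x, q t) + (∫ t in x..(x + dt x), q t)) = 2 := by
      rw [intervalIntegral.integral_add_adjacent_intervals (hqint (x - dt x) x)
        (hqint x (x + dt x))]
      exact heq
    exact stmt12_bound_algebra (u x) (v x) (u' x) (v' x) (u (x + dt x)) (v (x - dt x))
      (dt x) (∫ t in (x - dt x)..x, q t) (∫ t in x..(x + dt x), q t)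
      (hupos x) (hvpos x) hδ hM1 hM2 hWx hMsum hA hB hAu hBv hA' hB'


end
end

section
/- Suppose conditions (1.2) and (1.6) hold. Then for all x ∈ ℝ and all t ∈ [x − d(x), x + d(x)], the following estimates hold: e⁻²ρ(x) ≤ ρ(t) ≤ e²ρ(x), where ρ = uv. -/
open MeasureTheory Set Filter
open scoped ENNReal

noncomputable section

lemma locInt_intervalIntegrable {f : ℝ → ℝ} (h : LocallyIntegrable f volume) (a b : ℝ) :
    IntervalIntegrable f volume a b := by
  rw [intervalIntegrable_iff]
  exact (h.integrableOn_isCompact isCompact_uIcc).mono_set Set.uIoc_subset_uIcc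

lemma ftc_two_point {g g' : ℝ → ℝ} (hint : ∀ a b : ℝ, IntervalIntegrable g' volume a b)
    (hrep : ∀ x : ℝ, g x = g 0 + ∫ t in (0:ℝ)..x, g' t) (s t : ℝ) :
    g t - g s = ∫ τ in s..t, g' τ := by
  have h := intervalIntegral.integral_add_adjacent_intervals (hint 0 s) (hint s t)
  rw [hrep t, hrep s]
  linarith [h]

lemma cont_of_rep {g g' : ℝ → ℝ} (hint : ∀ a b : ℝ, IntervalIntegrable g' volume a b)
    (hrep : ∀ x : ℝ, g x = g 0 + ∫ t in (0:ℝ)..x, g' t) : Continuous g := by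
  have : Continuous fun x : ℝ => g 0 + ∫ t in (0:ℝ)..x, g' t :=
    continuous_const.add (intervalIntegral.continuous_primitive hint 0)
  exact this.congr fun x => (hrep x).symm

/-- `g'/g` is interval integrable when `g` is continuous positive and `g'` integrable. -/
lemma ii_div {g g' : ℝ → ℝ} (hint : ∀ a b : ℝ, IntervalIntegrable g' volume a b)
    (hpos : ∀ t, 0 < g t) (hcont : Continuous g) (s t : ℝ) :
    IntervalIntegrable (fun τ => g' τ / g τ) volume s t := by
  rw [intervalIntegrable_iff] at *
  have hK : IsCompact (Set.uIcc s t) := isCompact_uIcc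
  obtain ⟨m, hm, hmle⟩ : ∃ m : ℝ, 0 < m ∧ ∀ τ ∈ Set.uIcc s t, m ≤ g τ := by
    obtain ⟨z, hz, hzmin⟩ := hK.exists_isMinOn (Set.nonempty_uIcc) hcont.continuousOn
    exact ⟨g z, hpos z, fun τ hτ => hzmin hτ⟩
  have hi := (hint s t)
  rw [intervalIntegrable_iff] at hi
  have hbnd : Integrable (fun τ => m⁻¹ * |g' τ|) (volume.restrict (Set.uIoc s t)) :=
    (hi.abs.const_mul m⁻¹)
  refine Integrable.mono' hbnd ?_ ?_
  · exact (hi.aestronglyMeasurable.mul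
      ((hcont.inv₀ (fun x => (hpos x).ne')).aestronglyMeasurable.restrict)).congr
      (Filter.Eventually.of_forall fun τ => by simp [div_eq_mul_inv])
  · refine (ae_restrict_iff' measurableSet_uIoc).mpr (Filter.Eventually.of_forall fun τ hτ => ?_)
    have hg := hmle τ (Set.uIoc_subset_uIcc hτ)
    have h1 : |g' τ / g τ| ≤ |g' τ| * m⁻¹ := by
      rw [abs_div, div_eq_mul_inv]
      have : |g τ|⁻¹ ≤ m⁻¹ := by
        apply inv_anti₀ hm
        rwa [abs_of_pos (hpos τ)]
      exact mul_le_mul_of_nonneg_left this (abs_nonneg _)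
    calc ‖g' τ / g τ‖ = |g' τ / g τ| := rfl
      _ ≤ |g' τ| * m⁻¹ := h1
      _ = m⁻¹ * |g' τ| := mul_comm _ _

/-- Gronwall-type estimate: for a nondecreasing positive "absolutely continuous" `g`,
`g b ≤ g a * exp (∫_a^b g'/g)`. -/
lemma gronwall_core {g g' : ℝ → ℝ} {a b : ℝ} (hab : a ≤ b)
    (hint : ∀ s t : ℝ, IntervalIntegrable g' volume s t)
    (hftc : ∀ s t : ℝ, g t - g s = ∫ τ in s..t, g' τ)
    (hpos : ∀ t, 0 < g t) (hnn : ∀ t, 0 ≤ g' t)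
    (hcont : Continuous g) :
    g b ≤ g a * Real.exp (∫ τ in a..b, g' τ / g τ) := by
  have hW : ∀ s t : ℝ, IntervalIntegrable (fun τ => g' τ / g τ) volume s t :=
    ii_div hint hpos hcont
  set F : ℝ → ℝ := fun s => ∫ τ in a..s, g' τ / g τ with hF
  have hFcont : Continuous F := intervalIntegral.continuous_primitive hW a
  have hFdiff : ∀ s t : ℝ, F t - F s = ∫ τ in s..t, g' τ / g τ := by
    intro s t
    have h := intervalIntegral.integral_add_adjacent_intervals (hW a s) (hW s t)
    simp only [hF]; linarith
  have hWnn : ∀ τ, 0 ≤ g' τ / g τ := fun τ => div_nonneg (hnn τ) (hpos τ).le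
  have hFmono : ∀ s t : ℝ, s ≤ t → F s ≤ F t := by
    intro s t hst
    have h2 : 0 ≤ ∫ τ in s..t, g' τ / g τ :=
      intervalIntegral.integral_nonneg hst (fun τ _ => hWnn τ)
    linarith [hFdiff s t]
  have hgmono : ∀ s t : ℝ, s ≤ t → g s ≤ g t := by
    intro s t hst
    have h2 : 0 ≤ ∫ τ in s..t, g' τ := intervalIntegral.integral_nonneg hst (fun τ _ => hnn τ)
    linarith [hftc s t]
  have piece : ∀ s t : ℝ, s ≤ t → g t - g s ≤ g t * (F t - F s) := by
    intro s t hst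
    have hptwise : ∀ τ ∈ Set.Icc s t, g' τ ≤ g' τ / g τ * g t := by
      intro τ hτ
      have h1 : g' τ / g τ * g τ = g' τ := div_mul_cancel₀ (g' τ) (hpos τ).ne'
      calc g' τ = g' τ / g τ * g τ := h1.symm
        _ ≤ g' τ / g τ * g t := mul_le_mul_of_nonneg_left (hgmono τ t hτ.2) (hWnn τ)
    have hmono := intervalIntegral.integral_mono_on hst (hint s t)
      ((hW s t).mul_const (g t)) hptwise
    rw [intervalIntegral.integral_mul_const] at hmono
    rw [hftc s t, hFdiff s t]
    linarith [hmono]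
  have hFa : F a = 0 := intervalIntegral.integral_same
  set A : ℝ := F b with hAdef
  have hA0 : 0 ≤ A := hFa ▸ hFmono a b hab
  have hgoal : g b ≤ g a * Real.exp A := by
    rcases eq_or_lt_of_le hA0 with hA | hApos
    · -- A = 0
      have := piece a b hab
      rw [hFa, ← hAdef, ← hA] at this
      have hexp : Real.exp A = 1 := by rw [← hA]; exact Real.exp_zero
      rw [hexp]; linarith
    · -- A > 0
      have main : ∀ n : ℕ, A < n → g b * (1 - A / n) ^ n ≤ g a := by
        intro n hn
        have hnpos : (0:ℝ) < n := lt_of_le_of_lt hA0 hn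
        have h1 : 0 < 1 - A / n := by
          rw [sub_pos, div_lt_one hnpos]; exact hn
        have ivt : ∀ y : ℝ, ∃ s : ℝ, y ∈ Set.Icc 0 A → (s ∈ Set.Icc a b ∧ F s = y) := by
          intro y
          by_cases hy : y ∈ Set.Icc (0:ℝ) A
          · have himg := intermediate_value_Icc hab hFcont.continuousOn
            rw [hFa, ← hAdef] at himg
            obtain ⟨s, hs, hsy⟩ := himg hy
            exact ⟨s, fun _ => ⟨hs, hsy⟩⟩
          · exact ⟨a, fun h => absurd h hy⟩
        choose S hS using ivt
        set p : ℕ → ℝ := fun i => S (i * A / n) with hp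
        have hmem : ∀ i : ℕ, i ≤ n → p i ∈ Set.Icc a b ∧ F (p i) = i * A / n := by
          intro i hi
          refine hS _ ⟨by positivity, ?_⟩
          rw [div_le_iff₀ hnpos]
          have : (i:ℝ) ≤ n := Nat.cast_le.mpr hi
          nlinarith
        have hstep : ∀ i : ℕ, i < n → g (p (i+1)) * (1 - A / n) ≤ g (p i) := by
          intro i hi
          obtain ⟨hmi, hFi⟩ := hmem i hi.le
          obtain ⟨hmi1, hFi1⟩ := hmem (i+1) hi
          have hle : p i ≤ p (i+1) := by
            by_contra hcon
            push_neg at hcon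
            have := hFmono _ _ hcon.le
            rw [hFi, hFi1] at this
            have : ((i:ℝ)+1) * A ≤ i * A := by
              push_cast at this ⊢
              rw [div_le_div_iff₀ hnpos hnpos] at this
              nlinarith
            nlinarith
          have hpiece := piece (p i) (p (i+1)) hle
          rw [hFi, hFi1] at hpiece
          have hd : ((i:ℝ)+1) * A / n - i * A / n = A / n := by push_cast; ring
          push_cast at hpiece
          rw [hd] at hpiece
          have : g (p (i+1)) * (1 - A / n) = g (p (i+1)) - g (p (i+1)) * (A / n) := by ring
          linarith
        have key : ∀ k : ℕ, k ≤ n → g b * (1 - A / n) ^ k ≤ g (p (n - k)) := by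
          intro k
          induction k with
          | zero =>
            intro _
            obtain ⟨hmn, hFn⟩ := hmem n le_rfl
            have hFnA : F (p n) = A := by
              rw [hFn]; field_simp
            have := piece (p n) b hmn.2
            rw [hFnA, ← hAdef] at this
            simpa using by linarith
          | succ k ih =>
            intro hk
            have hkn : k ≤ n := Nat.le_of_succ_le hk
            have hi : n - (k+1) < n := by omega
            have hidx : n - k = (n - (k+1)) + 1 := by omega
            calc g b * (1 - A / n) ^ (k+1)
                = (g b * (1 - A / n) ^ k) * (1 - A / n) := by ring
              _ ≤ g (p (n - k)) * (1 - A / n) :=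
                  mul_le_mul_of_nonneg_right (ih hkn) h1.le
              _ = g (p ((n - (k+1)) + 1)) * (1 - A / n) := by rw [← hidx]
              _ ≤ g (p (n - (k+1))) := hstep _ hi
        have hfin := key n le_rfl
        simp only [Nat.sub_self] at hfin
        obtain ⟨hm0, hF0⟩ := hmem 0 (Nat.zero_le n)
        have hF0' : F (p 0) = 0 := by rw [hF0]; simp
        have hlast : g (p 0) ≤ g a := by
          have := piece a (p 0) hm0.1
          rw [hFa, hF0'] at this
          linarith
        linarith
      -- pass to the limit
      have hlim : Filter.Tendsto (fun n : ℕ => g b * (1 + (-A) / n) ^ n) Filter.atTop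
          (nhds (g b * Real.exp (-A))) :=
        (Real.tendsto_one_add_div_pow_exp (-A)).const_mul (g b)
      have hle : g b * Real.exp (-A) ≤ g a := by
        refine le_of_tendsto hlim ?_
        filter_upwards [Filter.eventually_gt_atTop (Nat.ceil A)] with n hn
        have hAn : A < n := lt_of_le_of_lt (Nat.le_ceil A) (Nat.cast_lt.mpr hn)
        have := main n hAn
        have heq : (1 + (-A) / (n:ℝ)) = 1 - A / n := by ring
        rw [heq]
        exact this
      calc g b = g b * Real.exp (-A) * Real.exp A := by
            rw [mul_assoc, ← Real.exp_add]; simp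
        _ ≤ g a * Real.exp A := mul_le_mul_of_nonneg_right hle (Real.exp_pos A).le
  exact hgoal

lemma gronwall_core_anti {g g' : ℝ → ℝ} {a b : ℝ} (hab : a ≤ b)
    (hint : ∀ s t : ℝ, IntervalIntegrable g' volume s t)
    (hftc : ∀ s t : ℝ, g t - g s = ∫ τ in s..t, g' τ)
    (hpos : ∀ t, 0 < g t) (hnp : ∀ t, g' t ≤ 0)
    (hcont : Continuous g) :
    g a ≤ g b * Real.exp (∫ τ in a..b, -g' τ / g τ) := by
  set c : ℝ := a + b with hc
  set G : ℝ → ℝ := fun s => g (c - s) with hG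
  set G' : ℝ → ℝ := fun s => -g' (c - s) with hG'
  have hGint : ∀ s t : ℝ, IntervalIntegrable G' volume s t := by
    intro s t
    have h := (hint (c - s) (c - t)).comp_sub_left c
    simp only [sub_sub_cancel] at h
    exact h.neg
  have hGftc : ∀ s t : ℝ, G t - G s = ∫ τ in s..t, G' τ := by
    intro s t
    have h1 : (∫ τ in s..t, G' τ) = -∫ τ in s..t, g' (c - τ) := by
      simp only [hG']
      rw [intervalIntegral.integral_neg]
    have h2 := hftc (c - t) (c - s)
    rw [h1, intervalIntegral.integral_comp_sub_left g' c, ← h2]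
    simp only [hG]; ring
  have hGpos : ∀ t, 0 < G t := fun t => hpos _
  have hGnn : ∀ t, 0 ≤ G' t := fun t => neg_nonneg.mpr (hnp _)
  have hGcont : Continuous G := hcont.comp (continuous_const.sub continuous_id)
  have h := gronwall_core hab hGint hGftc hGpos hGnn hGcont
  have hGa : G a = g b := by simp [hG, hc]
  have hGb : G b = g a := by simp [hG, hc]
  have hint2 : (∫ τ in a..b, G' τ / G τ) = ∫ τ in a..b, -g' τ / g τ := by
    have h2 := intervalIntegral.integral_comp_sub_left (fun x => -g' x / g x) c
      (a := a) (b := b)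
    simp only [hc] at h2 ⊢
    rw [show a + b - b = a by ring, show a + b - a = b by ring] at h2
    simp only [hG, hG', hc]
    rw [h2]
  rw [hGa, hGb, hint2] at h
  exact h

lemma key_v {r q v v' d1 : ℝ → ℝ}
    (hr : ∀ x : ℝ, 0 < r x) (hq : ∀ x : ℝ, 0 ≤ q x)
    (hrli : LocallyIntegrable (fun x : ℝ => (r x)⁻¹) volume)
    (hqli : LocallyIntegrable q volume)
    (hv'int : ∀ a b : ℝ, IntervalIntegrable v' volume a b)
    (hvftc : ∀ s t : ℝ, v t - v s = ∫ τ in s..t, v' τ)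
    (hqvint : ∀ a b : ℝ, IntervalIntegrable (fun t => q t * v t) volume a b)
    (hrvftc : ∀ s t : ℝ, r t * v' t - r s * v' s = ∫ τ in s..t, q τ * v τ)
    (hvpos : ∀ t, 0 < v t) (hv'nn : ∀ t, 0 ≤ v' t)
    (hd1 : IsD1 r q d1) (x : ℝ) :
    0 < phiF r d1 x ∧ r x * v' x * phiF r d1 x ≤ 2 * v x := by
  obtain ⟨hd1pos, hF1⟩ := hd1 x
  set a : ℝ := x - d1 x with hadef
  have ha : a < x := by simp only [hadef]; linarith
  have hrint := locInt_intervalIntegrable hrli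
  have hqint := locInt_intervalIntegrable hqli
  set φ : ℝ := phiF r d1 x with hφdef
  have hφeq : φ = ∫ t in a..x, (r t)⁻¹ := rfl
  have hφpos : 0 < φ := by
    rw [hφeq]
    exact intervalIntegral.intervalIntegral_pos_of_pos_on (hrint a x)
      (fun t _ => inv_pos.mpr (hr t)) ha
  have hQ : (∫ t in a..x, q t) = 1 / φ := by
    have h1 : φ * ∫ t in a..x, q t = 1 := hF1
    field_simp
    linarith [h1]
  have hvmono : ∀ s t : ℝ, s ≤ t → v s ≤ v t := by
    intro s t hst
    have h0 := intervalIntegral.integral_nonneg (μ := volume) hst (fun τ _ => hv'nn τ)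
    linarith [hvftc s t]
  have hrvmono : ∀ s t : ℝ, s ≤ t → r s * v' s ≤ r t * v' t := by
    intro s t hst
    have h0 := intervalIntegral.integral_nonneg (μ := volume) hst
      (fun τ _ => mul_nonneg (hq τ) (hvpos τ).le)
    linarith [hrvftc s t]
  -- Step (i)
  have hstep1 : r a * v' a * φ ≤ v x := by
    have hpt : ∀ t ∈ Icc a x, r a * v' a * (r t)⁻¹ ≤ v' t := by
      intro t ht
      have h1 : r a * v' a ≤ r t * v' t := hrvmono a t ht.1
      calc r a * v' a * (r t)⁻¹ ≤ r t * v' t * (r t)⁻¹ :=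
            mul_le_mul_of_nonneg_right h1 (inv_pos.mpr (hr t)).le
        _ = v' t := by rw [mul_comm (r t) (v' t)]; exact mul_inv_cancel_right₀ (hr t).ne' (v' t)
    have hmono := intervalIntegral.integral_mono_on ha.le
      ((hrint a x).const_mul (r a * v' a)) (hv'int a x) hpt
    rw [intervalIntegral.integral_const_mul] at hmono
    have h2 := hvftc a x
    rw [hφeq]
    have h3 : 0 < v a := hvpos a
    linarith
  -- Step (ii)
  have hstep2 : r x * v' x ≤ r a * v' a + v x / φ := by
    have hpt : ∀ t ∈ Icc a x, q t * v t ≤ q t * v x := fun t ht =>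
      mul_le_mul_of_nonneg_left (hvmono t x ht.2) (hq t)
    have hmono := intervalIntegral.integral_mono_on ha.le (hqvint a x)
      ((hqint a x).mul_const (v x)) hpt
    rw [intervalIntegral.integral_mul_const, hQ] at hmono
    have h2 := hrvftc a x
    have : (1 / φ) * v x = v x / φ := by ring
    linarith [h2, hmono]
  have hra : r a * v' a ≤ v x / φ := by
    rw [le_div_iff₀ hφpos]
    exact hstep1
  refine ⟨hφpos, ?_⟩
  have h4 : r x * v' x ≤ 2 * v x / φ := by
    have : r a * v' a + v x / φ ≤ 2 * v x / φ := by
      have : v x / φ + v x / φ = 2 * v x / φ := by ring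
      linarith
    linarith
  calc r x * v' x * φ ≤ (2 * v x / φ) * φ :=
        mul_le_mul_of_nonneg_right h4 hφpos.le
    _ = 2 * v x := by field_simp

lemma key_u {r q u u' d2 : ℝ → ℝ}
    (hr : ∀ x : ℝ, 0 < r x) (hq : ∀ x : ℝ, 0 ≤ q x)
    (hrli : LocallyIntegrable (fun x : ℝ => (r x)⁻¹) volume)
    (hqli : LocallyIntegrable q volume)
    (hu'int : ∀ a b : ℝ, IntervalIntegrable u' volume a b)
    (huftc : ∀ s t : ℝ, u t - u s = ∫ τ in s..t, u' τ)
    (hquint : ∀ a b : ℝ, IntervalIntegrable (fun t => q t * u t) volume a b)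
    (hruftc : ∀ s t : ℝ, r t * u' t - r s * u' s = ∫ τ in s..t, q τ * u τ)
    (hupos : ∀ t, 0 < u t) (hu'np : ∀ t, u' t ≤ 0)
    (hd2 : IsD2 r q d2) (x : ℝ) :
    0 < psiF r d2 x ∧ r x * (-u' x) * psiF r d2 x ≤ 2 * u x := by
  obtain ⟨hd2pos, hF2⟩ := hd2 x
  set b : ℝ := x + d2 x with hbdef
  have hb : x < b := by simp only [hbdef]; linarith
  have hrint := locInt_intervalIntegrable hrli
  have hqint := locInt_intervalIntegrable hqli
  set ψ : ℝ := psiF r d2 x with hψdef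
  have hψeq : ψ = ∫ t in x..b, (r t)⁻¹ := rfl
  have hψpos : 0 < ψ := by
    rw [hψeq]
    exact intervalIntegral.intervalIntegral_pos_of_pos_on (hrint x b)
      (fun t _ => inv_pos.mpr (hr t)) hb
  have hQ : (∫ t in x..b, q t) = 1 / ψ := by
    have h1 : ψ * ∫ t in x..b, q t = 1 := hF2
    field_simp
    linarith [h1]
  have humono : ∀ s t : ℝ, s ≤ t → u t ≤ u s := by
    intro s t hst
    have h0 := intervalIntegral.integral_nonneg (μ := volume) (f := fun τ => -u' τ) hst
      (fun τ _ => neg_nonneg.mpr (hu'np τ))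
    rw [intervalIntegral.integral_neg] at h0
    linarith [huftc s t]
  have hrumono : ∀ s t : ℝ, s ≤ t → r s * u' s ≤ r t * u' t := by
    intro s t hst
    have h0 := intervalIntegral.integral_nonneg (μ := volume) hst
      (fun τ _ => mul_nonneg (hq τ) (hupos τ).le)
    linarith [hruftc s t]
  -- Step (i)
  have hstep1 : -(r b * u' b) * ψ ≤ u x := by
    have hpt : ∀ t ∈ Icc x b, -(r b * u' b) * (r t)⁻¹ ≤ -u' t := by
      intro t ht
      have h1 : -(r b * u' b) ≤ -(r t * u' t) := neg_le_neg (hrumono t b ht.2)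
      calc -(r b * u' b) * (r t)⁻¹ ≤ -(r t * u' t) * (r t)⁻¹ :=
            mul_le_mul_of_nonneg_right h1 (inv_pos.mpr (hr t)).le
        _ = -u' t := by
            rw [show -(r t * u' t) = -u' t * r t by ring]
            exact mul_inv_cancel_right₀ (hr t).ne' (-u' t)
    have hmono := intervalIntegral.integral_mono_on hb.le
      ((hrint x b).const_mul (-(r b * u' b))) ((hu'int x b).neg) hpt
    simp only [Pi.neg_apply] at hmono
    rw [intervalIntegral.integral_const_mul, intervalIntegral.integral_neg, ← hψeq] at hmono
    have h2 := huftc x b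
    have h3 : 0 < u b := hupos b
    linarith
  -- Step (ii)
  have hstep2 : -(r x * u' x) ≤ -(r b * u' b) + u x / ψ := by
    have hpt : ∀ t ∈ Icc x b, q t * u t ≤ q t * u x := fun t ht =>
      mul_le_mul_of_nonneg_left (humono x t ht.1) (hq t)
    have hmono := intervalIntegral.integral_mono_on hb.le (hquint x b)
      ((hqint x b).mul_const (u x)) hpt
    rw [intervalIntegral.integral_mul_const, hQ] at hmono
    have h2 := hruftc x b
    have : (1 / ψ) * u x = u x / ψ := by ring
    linarith [h2, hmono]
  have hrb : -(r b * u' b) ≤ u x / ψ := by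
    rw [le_div_iff₀ hψpos]
    exact hstep1
  refine ⟨hψpos, ?_⟩
  have h4 : -(r x * u' x) ≤ 2 * u x / ψ := by
    have : u x / ψ + u x / ψ = 2 * u x / ψ := by ring
    linarith
  have h5 : r x * -u' x = -(r x * u' x) := by ring
  calc r x * -u' x * ψ = -(r x * u' x) * ψ := by ring
    _ ≤ (2 * u x / ψ) * ψ := mul_le_mul_of_nonneg_right h4 hψpos.le
    _ = 2 * u x := by field_simp

/-- Lemma 2.8: under (1.2) and (1.6), for all `x ∈ ℝ` and
`t ∈ [x - d(x), x + d(x)]`: `e⁻² ρ(x) ≤ ρ(t) ≤ e² ρ(x)` where `ρ = u·v`. -/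
theorem stmt_13 (r q u u' v v' d1 d2 d : ℝ → ℝ) (h12 : Cond12 r q) (h16 : Cond16 r q)
    (hFSS : IsFSS r q u u' v v') (hd1 : IsD1 r q d1) (hd2 : IsD2 r q d2)
    (hd : IsD r (hF r d1 d2) d) :
    ∀ x t : ℝ, t ∈ Icc (x - d x) (x + d x) →
      Real.exp (-2) * (u x * v x) ≤ u t * v t ∧
      u t * v t ≤ Real.exp 2 * (u x * v x) := by
  obtain ⟨hr, hq, hrli, hqli⟩ := h12
  obtain ⟨husol, hvsol, hupos, hvpos, hv'nn, hu'np, hWr, hrest⟩ := hFSS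
  obtain ⟨hu'int, hurep, hquint0, hrurep⟩ := husol
  obtain ⟨hv'int, hvrep, hqvint0, hrvrep⟩ := hvsol
  -- basic consequences
  have huftc : ∀ s t : ℝ, u t - u s = ∫ τ in s..t, u' τ := ftc_two_point hu'int hurep
  have hvftc : ∀ s t : ℝ, v t - v s = ∫ τ in s..t, v' τ := ftc_two_point hv'int hvrep
  have hucont : Continuous u := cont_of_rep hu'int hurep
  have hvcont : Continuous v := cont_of_rep hv'int hvrep
  have hquint : ∀ a b : ℝ, IntervalIntegrable (fun t => q t * u t) volume a b := by
    intro a b; have := hquint0 a b; simpa using this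
  have hqvint : ∀ a b : ℝ, IntervalIntegrable (fun t => q t * v t) volume a b := by
    intro a b; have := hqvint0 a b; simpa using this
  have hruftc : ∀ s t : ℝ, r t * u' t - r s * u' s = ∫ τ in s..t, q τ * u τ := by
    intro s t
    have h := ftc_two_point (g := fun x => r x * u' x) hquint0 hrurep s t
    simpa using h
  have hrvftc : ∀ s t : ℝ, r t * v' t - r s * v' s = ∫ τ in s..t, q τ * v τ := by
    intro s t
    have h := ftc_two_point (g := fun x => r x * v' x) hqvint0 hrvrep s t
    simpa using h
  have humono : ∀ s t : ℝ, s ≤ t → u t ≤ u s := by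
    intro s t hst
    have h0 := intervalIntegral.integral_nonneg (μ := volume) (f := fun τ => -u' τ) hst
      (fun τ _ => neg_nonneg.mpr (hu'np τ))
    rw [intervalIntegral.integral_neg] at h0
    linarith [huftc s t]
  have hvmono : ∀ s t : ℝ, s ≤ t → v s ≤ v t := by
    intro s t hst
    have h0 := intervalIntegral.integral_nonneg (μ := volume) hst (fun τ _ => hv'nn τ)
    linarith [hvftc s t]
  -- key estimates and pointwise bound by 2/(r h)
  have hkeyv := fun ξ => key_v hr hq hrli hqli hv'int hvftc hqvint hrvftc hvpos hv'nn hd1 ξ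
  have hkeyu := fun ξ => key_u hr hq hrli hqli hu'int huftc hquint hruftc hupos hu'np hd2 ξ
  have hhpos : ∀ ξ : ℝ, 0 < hF r d1 d2 ξ := by
    intro ξ
    have h1 := (hkeyv ξ).1
    have h2 := (hkeyu ξ).1
    exact div_pos (mul_pos h1 h2) (add_pos h1 h2)
  have hWbd : ∀ ξ : ℝ, v' ξ / v ξ + -u' ξ / u ξ ≤ 2 * (r ξ * hF r d1 d2 ξ)⁻¹ := by
    intro ξ
    obtain ⟨hφ, hkv⟩ := hkeyv ξ
    obtain ⟨hψ, hku⟩ := hkeyu ξ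
    set φ := phiF r d1 ξ
    set ψ := psiF r d2 ξ
    have hrξ := hr ξ
    have h1 : v' ξ / v ξ ≤ 2 / (r ξ * φ) := by
      rw [div_le_div_iff₀ (hvpos ξ) (by positivity)]
      nlinarith [hkv]
    have h2 : -u' ξ / u ξ ≤ 2 / (r ξ * ψ) := by
      rw [div_le_div_iff₀ (hupos ξ) (by positivity)]
      nlinarith [hku]
    have h3 : 2 / (r ξ * φ) + 2 / (r ξ * ψ) = 2 * (r ξ * (φ * ψ / (φ + ψ)))⁻¹ := by
      field_simp
      ring
    have h4 : hF r d1 d2 ξ = φ * ψ / (φ + ψ) := rfl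
    rw [h4, ← h3]
    linarith
  -- the interval
  intro x t ht
  obtain ⟨hdx, hdint⟩ := hd x
  set a : ℝ := x - d x with hadef
  set b : ℝ := x + d x with hbdef
  have hax : a ≤ x := by simp only [hadef]; linarith
  have hxb : x ≤ b := by simp only [hbdef]; linarith
  have hab : a ≤ b := hax.trans hxb
  -- integrability of (r·h)⁻¹ on [a,b]
  set k : ℝ → ℝ := fun ξ => (r ξ * hF r d1 d2 ξ)⁻¹ with hkdef
  have hkII : IntervalIntegrable k volume a b := by
    rw [intervalIntegrable_iff, Set.uIoc_of_le hab]
    by_contra hcon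
    rw [intervalIntegral.integral_of_le hab] at hdint
    rw [MeasureTheory.integral_undef hcon] at hdint
    norm_num at hdint
  -- integrability of the logarithmic derivatives
  have hIv : ∀ s t : ℝ, IntervalIntegrable (fun ξ => v' ξ / v ξ) volume s t :=
    ii_div hv'int hvpos hvcont
  have hIu : ∀ s t : ℝ, IntervalIntegrable (fun ξ => -u' ξ / u ξ) volume s t :=
    ii_div (g' := fun ξ => -u' ξ) (fun s t => (hu'int s t).neg) hupos hucont
  have hWII : ∀ s t : ℝ, IntervalIntegrable (fun ξ => v' ξ / v ξ + -u' ξ / u ξ) volume s t :=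
    fun s t => (hIv s t).add (hIu s t)
  have hIvnn : ∀ ξ : ℝ, 0 ≤ v' ξ / v ξ := fun ξ => div_nonneg (hv'nn ξ) (hvpos ξ).le
  have hIunn : ∀ ξ : ℝ, 0 ≤ -u' ξ / u ξ :=
    fun ξ => div_nonneg (neg_nonneg.mpr (hu'np ξ)) (hupos ξ).le
  have hWnn : ∀ ξ : ℝ, 0 ≤ v' ξ / v ξ + -u' ξ / u ξ :=
    fun ξ => add_nonneg (hIvnn ξ) (hIunn ξ)
  -- total bound
  have htot : (∫ ξ in a..b, (v' ξ / v ξ + -u' ξ / u ξ)) ≤ 2 := by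
    have hmono := intervalIntegral.integral_mono_on hab (hWII a b)
      (hkII.const_mul 2) (fun ξ _ => hWbd ξ)
    rw [intervalIntegral.integral_const_mul, hdint] at hmono
    linarith
  have hseg : ∀ s t : ℝ, a ≤ s → s ≤ t → t ≤ b →
      (∫ τ in s..t, v' τ / v τ) ≤ 2 ∧ (∫ τ in s..t, -u' τ / u τ) ≤ 2 := by
    intro s t has hst htb
    have hsplit1 := intervalIntegral.integral_add_adjacent_intervals (hWII a s) (hWII s t)
    have hsplit2 := intervalIntegral.integral_add_adjacent_intervals (hWII a t) (hWII t b)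
    have h1 : 0 ≤ ∫ ξ in a..s, (v' ξ / v ξ + -u' ξ / u ξ) :=
      intervalIntegral.integral_nonneg has (fun ξ _ => hWnn ξ)
    have h2 : 0 ≤ ∫ ξ in t..b, (v' ξ / v ξ + -u' ξ / u ξ) :=
      intervalIntegral.integral_nonneg htb (fun ξ _ => hWnn ξ)
    have hWst : (∫ ξ in s..t, (v' ξ / v ξ + -u' ξ / u ξ)) ≤ 2 := by linarith
    constructor
    · have := intervalIntegral.integral_mono_on hst (hIv s t) (hWII s t)
        (fun ξ _ => le_add_of_nonneg_right (hIunn ξ))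
      linarith
    · have := intervalIntegral.integral_mono_on hst (hIu s t) (hWII s t)
        (fun ξ _ => le_add_of_nonneg_left (hIvnn ξ))
      linarith
  -- case split
  rcases le_total x t with hxt | htx
  · -- x ≤ t ≤ b
    have htb : t ≤ b := ht.2
    obtain ⟨hAv, hBu⟩ := hseg x t hax hxt htb
    have h1 : v t ≤ v x * Real.exp (∫ τ in x..t, v' τ / v τ) :=
      gronwall_core hxt hv'int hvftc hvpos hv'nn hvcont
    have h2 : u x ≤ u t * Real.exp (∫ τ in x..t, -u' τ / u τ) := by
      have := gronwall_core_anti hxt hu'int huftc hupos hu'np hucont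
      simpa using this
    have hA2 : Real.exp (∫ τ in x..t, v' τ / v τ) ≤ Real.exp 2 := Real.exp_le_exp.mpr hAv
    have hB2 : Real.exp (∫ τ in x..t, -u' τ / u τ) ≤ Real.exp 2 := Real.exp_le_exp.mpr hBu
    constructor
    · -- lower bound
      have h3 : u x ≤ u t * Real.exp 2 := by
        calc u x ≤ u t * Real.exp (∫ τ in x..t, -u' τ / u τ) := h2
          _ ≤ u t * Real.exp 2 := mul_le_mul_of_nonneg_left hB2 (hupos t).le
      have h4 : Real.exp (-2) * u x ≤ u t := by
        rw [show (-2 : ℝ) = -(2:ℝ) by norm_num, Real.exp_neg]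
        rw [inv_mul_le_iff₀ (Real.exp_pos 2), mul_comm]
        exact h3
      calc Real.exp (-2) * (u x * v x) = (Real.exp (-2) * u x) * v x := by ring
        _ ≤ u t * v x := mul_le_mul_of_nonneg_right h4 (hvpos x).le
        _ ≤ u t * v t := mul_le_mul_of_nonneg_left (hvmono x t hxt) (hupos t).le
    · -- upper bound
      calc u t * v t ≤ u x * v t := mul_le_mul_of_nonneg_right (humono x t hxt) (hvpos t).le
        _ ≤ u x * (v x * Real.exp (∫ τ in x..t, v' τ / v τ)) :=
            mul_le_mul_of_nonneg_left h1 (hupos x).le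
        _ ≤ u x * (v x * Real.exp 2) :=
            mul_le_mul_of_nonneg_left (mul_le_mul_of_nonneg_left hA2 (hvpos x).le) (hupos x).le
        _ = Real.exp 2 * (u x * v x) := by ring
  · -- a ≤ t ≤ x
    have hta : a ≤ t := ht.1
    obtain ⟨hAv, hBu⟩ := hseg t x hta htx hxb
    have h1 : v x ≤ v t * Real.exp (∫ τ in t..x, v' τ / v τ) :=
      gronwall_core htx hv'int hvftc hvpos hv'nn hvcont
    have h2 : u t ≤ u x * Real.exp (∫ τ in t..x, -u' τ / u τ) := by
      have := gronwall_core_anti htx hu'int huftc hupos hu'np hucont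
      simpa using this
    have hA2 : Real.exp (∫ τ in t..x, v' τ / v τ) ≤ Real.exp 2 := Real.exp_le_exp.mpr hAv
    have hB2 : Real.exp (∫ τ in t..x, -u' τ / u τ) ≤ Real.exp 2 := Real.exp_le_exp.mpr hBu
    constructor
    · -- lower bound
      have h3 : v x ≤ v t * Real.exp 2 := by
        calc v x ≤ v t * Real.exp (∫ τ in t..x, v' τ / v τ) := h1
          _ ≤ v t * Real.exp 2 := mul_le_mul_of_nonneg_left hA2 (hvpos t).le
      have h4 : Real.exp (-2) * v x ≤ v t := by
        rw [show (-2 : ℝ) = -(2:ℝ) by norm_num, Real.exp_neg]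
        rw [inv_mul_le_iff₀ (Real.exp_pos 2), mul_comm]
        exact h3
      calc Real.exp (-2) * (u x * v x) = u x * (Real.exp (-2) * v x) := by ring
        _ ≤ u x * v t := mul_le_mul_of_nonneg_left h4 (hupos x).le
        _ ≤ u t * v t := mul_le_mul_of_nonneg_right (humono t x htx) (hvpos t).le
    · -- upper bound
      have h3 : u t ≤ u x * Real.exp 2 := by
        calc u t ≤ u x * Real.exp (∫ τ in t..x, -u' τ / u τ) := h2
          _ ≤ u x * Real.exp 2 := mul_le_mul_of_nonneg_left hB2 (hupos x).le
      calc u t * v t ≤ u t * v x := mul_le_mul_of_nonneg_left (hvmono t x htx) (hupos t).le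
        _ ≤ (u x * Real.exp 2) * v x := mul_le_mul_of_nonneg_right h3 (hvpos x).le
        _ = Real.exp 2 * (u x * v x) := by ring

end
end
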